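/- arXiv:1106.1114 — 7 statements merged into one kernel-verified Lean document; each statement's English description precedes it below -/
import Mathlib

section
/- Every separable state on a bipartite system has a positive semidefinite partial transpose, i.e., if ρ = Σ_k q_k |φ_k⟩⟨φ_k| ⊗ |ψ_k⟩⟨ψ_k| with q_k ≥ 0 summing to one, then ρ^{T_A} ≥ 0. -/
open Matrix ComplexOrder

/-- Partial transposition on the first tensor factor, in a fixed product basis. -/
def ptA {α β : Type*} (ρ : Matrix (α × β) (α × β) ℂ) : Matrix (α × β) (α × β) ℂ :=
  Matrix.of fun p q => ρ (q.1, p.2) (p.1, q.2)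

theorem stmt1 {α β : Type*} [Fintype α] [Fintype β] {m : ℕ}
    (q : Fin m → ℝ) (φ : Fin m → α → ℂ) (ψ : Fin m → β → ℂ)
    (hq : ∀ k, 0 ≤ q k) (hq1 : ∑ k, q k = 1)
    (ρ : Matrix (α × β) (α × β) ℂ)
    (hρ : ρ = ∑ k, (q k : ℂ) • Matrix.of (fun p r : α × β =>
      (φ k p.1 * star (φ k r.1)) * (ψ k p.2 * star (ψ k r.2)))) :
    (ptA ρ).PosSemidef := by
  set A : Matrix (α × β) (Fin m) ℂ :=
    Matrix.of fun p k => (Real.sqrt (q k) : ℂ) * (star (φ k p.1) * ψ k p.2) with hA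
  have key : ptA ρ = A * Aᴴ := by
    ext p r
    simp only [ptA, hρ, Matrix.of_apply, Matrix.mul_apply, Matrix.conjTranspose_apply,
      Matrix.sum_apply, Matrix.smul_apply, hA, smul_eq_mul]
    refine Finset.sum_congr rfl fun k _ => ?_
    have hs : (Real.sqrt (q k) : ℂ) * (Real.sqrt (q k) : ℂ) = (q k : ℂ) := by
      rw [← Complex.ofReal_mul, Real.mul_self_sqrt (hq k)]
    simp only [star_mul', star_star, RCLike.star_def, Complex.conj_ofReal]
    ring_nf
    simp only [Complex.conj_conj]
    rw [show ((Real.sqrt (q k) : ℂ))^2 = (q k : ℂ) by rw [sq]; exact hs]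
    ring
  rw [key]
  exact Matrix.posSemidef_self_mul_conjTranspose A
end

section
/- Let |ψ⟩ have Schmidt decomposition |ψ⟩ = Σ_i λ_i |μ_i⟩⊗|ν_i⟩ with λ_i ≥ 0 with respect to a bipartition of a finite-dimensional Hilbert space. Then for every normalized vector |φ⟩, ⟨φ| (|ψ⟩⟨ψ|)^{T_A} |φ⟩ ≤ max_i λ_i². -/
open Matrix ComplexOrder

private lemma sum4_swap {ι κ σ τ : Type*} [Fintype ι] [Fintype κ] [Fintype σ] [Fintype τ]
    (f : ι → κ → σ → τ → ℂ) :
    ∑ a, ∑ b, ∑ c, ∑ d, f a b c d = ∑ c, ∑ d, ∑ a, ∑ b, f a b c d := by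
  calc ∑ a, ∑ b, ∑ c, ∑ d, f a b c d
      = ∑ a, ∑ c, ∑ b, ∑ d, f a b c d :=
        Finset.sum_congr rfl fun a _ => Finset.sum_comm
    _ = ∑ c, ∑ a, ∑ b, ∑ d, f a b c d := Finset.sum_comm
    _ = ∑ c, ∑ a, ∑ d, ∑ b, f a b c d :=
        Finset.sum_congr rfl fun c _ => Finset.sum_congr rfl fun a _ => Finset.sum_comm
    _ = ∑ c, ∑ d, ∑ a, ∑ b, f a b c d :=
        Finset.sum_congr rfl fun c _ => Finset.sum_comm

/-- For `|ψ⟩ = Σ λ_i |μ_i⟩⊗|ν_i⟩` a Schmidt decomposition and any unit vector `|φ⟩`,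
`⟨φ|(|ψ⟩⟨ψ|)^{T_A}|φ⟩ ≤ max_i λ_i²`. -/
theorem stmt4 {α β : Type*} [Fintype α] [Fintype β] {m : ℕ}
    (lam : Fin m → ℝ) (μ : Fin m → α → ℂ) (ν : Fin m → β → ℂ)
    (hlam : ∀ i, 0 ≤ lam i)
    (hμ : ∀ i j, star (μ i) ⬝ᵥ μ j = if i = j then 1 else 0)
    (hν : ∀ i j, star (ν i) ⬝ᵥ ν j = if i = j then 1 else 0)
    (ψ : α × β → ℂ) (hψ : ψ = fun p => ∑ i, (lam i : ℂ) * μ i p.1 * ν i p.2)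
    (φ : α × β → ℂ) (hφ : star φ ⬝ᵥ φ = 1) :
    (star φ ⬝ᵥ (ptA (Matrix.of fun p q => ψ p * star (ψ q))) *ᵥ φ).re ≤ ⨆ i, (lam i) ^ 2 := by
  classical
  set M : ℝ := ⨆ i, (lam i) ^ 2 with hMdef
  have hM0 : 0 ≤ M := Real.iSup_nonneg fun i => sq_nonneg _
  have hM : ∀ i, lam i ^ 2 ≤ M := fun i =>
    le_ciSup (Set.Finite.bddAbove (Set.finite_range (fun i => lam i ^ 2))) i
  set c : Fin m → Fin m → ℂ := fun i j => ∑ p, φ p * μ i p.1 * star (ν j p.2) with hc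
  -- Step 1: the key algebraic identity
  have expand : star φ ⬝ᵥ (ptA (Matrix.of fun p q => ψ p * star (ψ q))) *ᵥ φ
      = ∑ i, ∑ j, ((lam i * lam j : ℝ) : ℂ) * (star (c j i) * c i j) := by
    have key : ∀ p q : α × β,
        star (φ p) * ((ψ (q.1, p.2) * star (ψ (p.1, q.2))) * φ q)
        = ∑ i, ∑ j, ((lam i * lam j : ℝ) : ℂ) *
            ((star (φ p) * star (μ j p.1) * ν i p.2) * (φ q * μ i q.1 * star (ν j q.2))) := by
      intro p q
      subst hψ
      simp only [star_sum, Finset.sum_mul, Finset.mul_sum, star_mul', Complex.star_def,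
        Complex.conj_ofReal]
      rw [Finset.sum_comm]
      refine Finset.sum_congr rfl fun i _ => Finset.sum_congr rfl fun j _ => ?_
      push_cast
      ring
    calc star φ ⬝ᵥ (ptA (Matrix.of fun p q => ψ p * star (ψ q))) *ᵥ φ
        = ∑ p, ∑ q, star (φ p) * ((ψ (q.1, p.2) * star (ψ (p.1, q.2))) * φ q) := by
          simp [dotProduct, mulVec, ptA, Finset.mul_sum, mul_assoc]
      _ = ∑ p, ∑ q, ∑ i, ∑ j, ((lam i * lam j : ℝ) : ℂ) *
            ((star (φ p) * star (μ j p.1) * ν i p.2) * (φ q * μ i q.1 * star (ν j q.2))) := by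
          exact Finset.sum_congr rfl fun p _ => Finset.sum_congr rfl fun q _ => key p q
      _ = ∑ i, ∑ j, ∑ p, ∑ q, ((lam i * lam j : ℝ) : ℂ) *
            ((star (φ p) * star (μ j p.1) * ν i p.2) * (φ q * μ i q.1 * star (ν j q.2))) :=
          sum4_swap _
      _ = ∑ i, ∑ j, ((lam i * lam j : ℝ) : ℂ) * (star (c j i) * c i j) := by
          refine Finset.sum_congr rfl fun i _ => Finset.sum_congr rfl fun j _ => ?_
          rw [hc]
          simp only [star_sum, star_mul', star_star, Finset.sum_mul, Finset.mul_sum]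
          rw [Finset.sum_comm]
  -- Step 2: Bessel's inequality
  have bessel : ∑ i, ∑ j, ‖c i j‖ ^ 2 ≤ 1 := by
    set v : Fin m × Fin m → EuclideanSpace ℂ (α × β) :=
      fun w => (WithLp.equiv 2 _).symm fun p => star (μ w.1 p.1) * ν w.2 p.2 with hv
    set x : EuclideanSpace ℂ (α × β) := (WithLp.equiv 2 _).symm φ with hx
    have hortho : Orthonormal ℂ v := by
      rw [orthonormal_iff_ite]
      intro w w'
      have : (inner ℂ (v w) (v w') : ℂ)
          = (∑ a, star (μ w'.1 a) * μ w.1 a) * (∑ b, star (ν w.2 b) * ν w'.2 b) := by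
        rw [hv, WithLp.equiv_symm_apply, EuclideanSpace.inner_toLp_toLp, Finset.sum_mul_sum]
        simp only [dotProduct, Pi.star_apply]
        rw [Fintype.sum_prod_type]
        refine Finset.sum_congr rfl fun a _ => Finset.sum_congr rfl fun b _ => ?_
        simp only [star_mul', star_star]
        ring
      rw [this]
      have h1 := hμ w'.1 w.1
      have h2 := hν w.2 w'.2
      simp only [dotProduct, Pi.star_apply] at h1 h2
      rw [h1, h2]
      by_cases h : w = w'
      · subst h; simp
      · rcases Prod.mk.injEq w.1 w.2 w'.1 w'.2 ▸ (fun hh => h (Prod.ext_iff.mpr hh)) with _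
        have : ¬(w'.1 = w.1 ∧ w.2 = w'.2) := by
          intro ⟨h1', h2'⟩
          exact h (Prod.ext h1'.symm h2')
        rw [if_neg h]
        rcases not_and_or.mp this with h' | h'
        · rw [if_neg h', zero_mul]
        · rw [if_neg h', mul_zero]
    have hxnorm : ‖x‖ ^ 2 = 1 := by
      have : (RCLike.re (inner ℂ x x : ℂ) : ℝ) = ‖x‖ ^ 2 := inner_self_eq_norm_sq x
      rw [← this, hx, WithLp.equiv_symm_apply, EuclideanSpace.inner_toLp_toLp, dotProduct_comm, hφ]
      simp
    have hb := hortho.sum_inner_products_le (s := Finset.univ) (x := x)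
    rw [hxnorm, Fintype.sum_prod_type] at hb
    refine le_trans (le_of_eq ?_) hb
    refine Finset.sum_congr rfl fun i _ => Finset.sum_congr rfl fun j _ => ?_
    have : (inner ℂ (v (i, j)) x : ℂ) = c i j := by
      rw [hv, hx, WithLp.equiv_symm_apply, EuclideanSpace.inner_toLp_toLp, hc]
      simp only [dotProduct, Pi.star_apply, star_mul', star_star]
      exact Finset.sum_congr rfl fun p _ => by ring
    rw [this]
  -- Step 3: combine
  rw [expand, Complex.re_sum]
  have step : ∀ i j : Fin m,
      (((lam i * lam j : ℝ) : ℂ) * (star (c j i) * c i j)).re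
        ≤ M * ((‖c i j‖ ^ 2 + ‖c j i‖ ^ 2) / 2) := by
    intro i j
    have h1 : (((lam i * lam j : ℝ) : ℂ) * (star (c j i) * c i j)).re
        = (lam i * lam j) * (star (c j i) * c i j).re := by
      simp [Complex.mul_re]
    rw [h1]
    have h2 : (star (c j i) * c i j).re ≤ ‖c j i‖ * ‖c i j‖ := by
      calc (star (c j i) * c i j).re ≤ ‖star (c j i) * c i j‖ := Complex.re_le_norm _
        _ = ‖c j i‖ * ‖c i j‖ := by
            rw [norm_mul]; simp
    have hll : 0 ≤ lam i * lam j := mul_nonneg (hlam i) (hlam j)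
    have hllM : lam i * lam j ≤ M := by nlinarith [hM i, hM j, hlam i, hlam j]
    have habs : ‖c j i‖ * ‖c i j‖
        ≤ (‖c i j‖ ^ 2 + ‖c j i‖ ^ 2) / 2 := by
      nlinarith [sq_nonneg (‖c i j‖ - ‖c j i‖)]
    have habsnn : (0:ℝ) ≤ ‖c j i‖ * ‖c i j‖ :=
      mul_nonneg (norm_nonneg _) (norm_nonneg _)
    calc lam i * lam j * (star (c j i) * c i j).re
        ≤ lam i * lam j * (‖c j i‖ * ‖c i j‖) := by
          exact mul_le_mul_of_nonneg_left h2 hll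
      _ ≤ M * ((‖c i j‖ ^ 2 + ‖c j i‖ ^ 2) / 2) := by
          exact mul_le_mul hllM habs habsnn hM0
  calc ∑ i, (∑ j, ((lam i * lam j : ℝ) : ℂ) * (star (c j i) * c i j)).re
      = ∑ i, ∑ j, (((lam i * lam j : ℝ) : ℂ) * (star (c j i) * c i j)).re := by
        exact Finset.sum_congr rfl fun i _ => Complex.re_sum _ _
    _ ≤ ∑ i, ∑ j, M * ((‖c i j‖ ^ 2 + ‖c j i‖ ^ 2) / 2) := by
        exact Finset.sum_le_sum fun i _ => Finset.sum_le_sum fun j _ => step i j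
    _ = M * ∑ i, ∑ j, ‖c i j‖ ^ 2 := by
        have hsum : ∑ i, ∑ j, ((‖c i j‖ ^ 2 + ‖c j i‖ ^ 2) / 2)
            = ∑ i, ∑ j, ‖c i j‖ ^ 2 := by
          have h1 : (∑ i, ∑ j, ((‖c i j‖ ^ 2 + ‖c j i‖ ^ 2) / 2))
              = ((∑ i, ∑ j, ‖c i j‖ ^ 2)
                  + (∑ i, ∑ j, ‖c j i‖ ^ 2)) / 2 := by
            rw [← Finset.sum_add_distrib, Finset.sum_div]
            refine Finset.sum_congr rfl fun i _ => ?_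
            rw [← Finset.sum_add_distrib, Finset.sum_div]
          have h2 : (∑ i, ∑ j, ‖c j i‖ ^ 2)
              = ∑ i, ∑ j, ‖c i j‖ ^ 2 := Finset.sum_comm
          rw [h1, h2]; ring
        simp only [← Finset.mul_sum]
        rw [hsum]
    _ ≤ M * 1 := by
        exact mul_le_mul_of_nonneg_left bessel hM0
    _ = M := mul_one M
end

section
/- Let |ψ⟩ be a unit vector in H_A ⊗ H_B with Schmidt coefficients λ_i ≥ 0 (so Σ_i λ_i² = 1), and suppose |ψ⟩ has at least two nonzero Schmidt coefficients. Then for every normalized vector |φ⟩, ⟨φ| (|ψ⟩⟨ψ|)^{T_A} |φ⟩ ≥ -1/2. -/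
open Matrix ComplexOrder

private lemma sum_swap4 {γ δ ι : Type*} [Fintype γ] [Fintype δ] [Fintype ι]
    (t : γ → δ → ι → ι → ℂ) :
    ∑ p, ∑ q, ∑ i, ∑ j, t p q i j = ∑ i, ∑ j, ∑ p, ∑ q, t p q i j :=
  calc ∑ p, ∑ q, ∑ i, ∑ j, t p q i j
      = ∑ p, ∑ i, ∑ j, ∑ q, t p q i j := Finset.sum_congr rfl fun p _ => by
        rw [Finset.sum_comm]; exact Finset.sum_congr rfl fun i _ => Finset.sum_comm
    _ = ∑ i, ∑ p, ∑ j, ∑ q, t p q i j := Finset.sum_comm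
    _ = ∑ i, ∑ j, ∑ p, ∑ q, t p q i j := Finset.sum_congr rfl fun i _ => Finset.sum_comm

/-- For a unit vector `|ψ⟩` with Schmidt coefficients `λ_i ≥ 0`, `Σ λ_i² = 1`, having at
least two nonzero Schmidt coefficients, and any unit vector `|φ⟩`,
`⟨φ|(|ψ⟩⟨ψ|)^{T_A}|φ⟩ ≥ -1/2`. -/
theorem stmt5 {α β : Type*} [Fintype α] [Fintype β] {m : ℕ}
    (lam : Fin m → ℝ) (μ : Fin m → α → ℂ) (ν : Fin m → β → ℂ)
    (hlam : ∀ i, 0 ≤ lam i) (hsum : ∑ i, (lam i) ^ 2 = 1)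
    (htwo : ∃ i j, i ≠ j ∧ lam i ≠ 0 ∧ lam j ≠ 0)
    (hμ : ∀ i j, star (μ i) ⬝ᵥ μ j = if i = j then 1 else 0)
    (hν : ∀ i j, star (ν i) ⬝ᵥ ν j = if i = j then 1 else 0)
    (ψ : α × β → ℂ) (hψ : ψ = fun p => ∑ i, (lam i : ℂ) * μ i p.1 * ν i p.2)
    (φ : α × β → ℂ) (hφ : star φ ⬝ᵥ φ = 1) :
    -(1/2) ≤ (star φ ⬝ᵥ (ptA (Matrix.of fun p q => ψ p * star (ψ q))) *ᵥ φ).re := by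
  classical
  subst hψ
  set A : Fin m → Fin m → ℂ :=
    fun i j => ∑ p : α × β, star (φ p) * star (μ i p.1) * ν j p.2 with hA
  -- Step 1: the quadratic form identity
  have key : star φ ⬝ᵥ (ptA (Matrix.of fun p q =>
        (∑ i, (lam i : ℂ) * μ i p.1 * ν i p.2) *
          star (∑ i, (lam i : ℂ) * μ i q.1 * ν i q.2))) *ᵥ φ
      = ∑ i, ∑ j, ((lam i : ℂ) * (lam j : ℂ)) * (A j i * star (A i j)) := by
    have lhs1 : star φ ⬝ᵥ (ptA (Matrix.of fun p q =>
          (∑ i, (lam i : ℂ) * μ i p.1 * ν i p.2) *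
            star (∑ i, (lam i : ℂ) * μ i q.1 * ν i q.2))) *ᵥ φ
        = ∑ p : α × β, ∑ q : α × β, ∑ i, ∑ j,
            ((lam i : ℂ) * (lam j : ℂ)) *
              (star (φ p) * star (μ j p.1) * ν i p.2) *
              (φ q * μ i q.1 * star (ν j q.2)) := by
      simp only [dotProduct, mulVec, ptA, Matrix.of_apply, Pi.star_apply, Finset.mul_sum]
      refine Finset.sum_congr rfl fun p _ => Finset.sum_congr rfl fun q _ => ?_
      rw [star_sum, Finset.sum_mul_sum]
      simp only [Finset.mul_sum, Finset.sum_mul]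
      refine Finset.sum_congr rfl fun i _ => Finset.sum_congr rfl fun j _ => ?_
      simp only [star_mul', Complex.star_def, Complex.conj_ofReal]
      ring
    rw [lhs1, sum_swap4]
    refine Finset.sum_congr rfl fun i _ => Finset.sum_congr rfl fun j _ => ?_
    have hstar : star (A i j) = ∑ q : α × β, φ q * μ i q.1 * star (ν j q.2) := by
      rw [hA]
      simp only [star_sum, star_mul', star_star]
    rw [hstar, hA]
    rw [Finset.sum_mul_sum]
    simp only [Finset.mul_sum]
    exact Finset.sum_congr rfl fun p _ => Finset.sum_congr rfl fun q _ => by ring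
  -- Step 2: Bessel's inequality for the family e (i,j) = star μ_i ⊗ ν_j
  set Φ : EuclideanSpace ℂ (α × β) := WithLp.toLp 2 φ with hΦdef
  set e : Fin m × Fin m → EuclideanSpace ℂ (α × β) :=
    fun ij => WithLp.toLp 2 (fun p => star (μ ij.1 p.1) * ν ij.2 p.2) with he_def
  have he : Orthonormal ℂ e := by
    rw [orthonormal_iff_ite]
    rintro ⟨i, j⟩ ⟨k, l⟩
    have hinner : (inner ℂ (e (i, j)) (e (k, l)) : ℂ)
        = (∑ a, μ i a * star (μ k a)) * (∑ b, star (ν j b) * ν l b) := by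
      rw [Finset.sum_mul_sum]
      simp only [PiLp.inner_apply, RCLike.inner_apply', PiLp.toLp_apply, he_def]
      rw [Fintype.sum_prod_type]
      refine Finset.sum_congr rfl fun a _ => Finset.sum_congr rfl fun b _ => ?_
      simp only [Complex.star_def, _root_.map_mul, Complex.conj_conj]
      ring
    have h1 : (∑ a, μ i a * star (μ k a)) = if i = k then 1 else 0 := by
      have := congrArg star (hμ i k)
      simp only [dotProduct, star_sum, star_mul', star_star, Pi.star_apply] at this
      rw [this]
      split_ifs <;> simp
    have h2 : (∑ b, star (ν j b) * ν l b) = if j = l then 1 else 0 := by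
      have := hν j l
      simpa [dotProduct] using this
    rw [hinner, h1, h2]
    by_cases hik : i = k <;> by_cases hjl : j = l <;>
      simp [hik, hjl, Prod.ext_iff]
  have hnorm : ‖Φ‖ ^ 2 = 1 := by
    have h1 : (inner ℂ Φ Φ : ℂ) = 1 := by
      rw [← hφ]
      simp only [PiLp.inner_apply, RCLike.inner_apply', PiLp.toLp_apply, dotProduct, hΦdef, Complex.star_def, Pi.star_apply]
    rw [inner_self_eq_norm_sq_to_K] at h1
    have := congrArg Complex.re h1
    simpa [← Complex.ofReal_pow] using this
  have hAe : ∀ i j, ‖A i j‖ = ‖(inner ℂ (e (i, j)) Φ : ℂ)‖ := by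
    intro i j
    have : (inner ℂ (e (i, j)) Φ : ℂ) = star (A i j) := by
      simp only [PiLp.inner_apply, RCLike.inner_apply', PiLp.toLp_apply, hA, star_sum, star_mul', star_star,
        he_def, hΦdef]
      refine Finset.sum_congr rfl fun p _ => ?_
      simp [Complex.star_def]
      ring
    rw [this, norm_star]
  have bessel : ∑ i, ∑ j, ‖A i j‖ ^ 2 ≤ 1 := by
    have hb := he.sum_inner_products_le (s := Finset.univ) Φ
    rw [hnorm] at hb
    calc ∑ i, ∑ j, ‖A i j‖ ^ 2
        = ∑ ij : Fin m × Fin m, ‖(inner ℂ (e ij) Φ : ℂ)‖ ^ 2 := by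
          rw [Fintype.sum_prod_type]
          exact Finset.sum_congr rfl fun i _ => Finset.sum_congr rfl fun j _ => by
            rw [hAe i j]
      _ ≤ 1 := hb
  -- Step 3: termwise estimate and conclusion
  have hterm : ∀ i j, -((1/4) * (‖A i j‖ ^ 2 + ‖A j i‖ ^ 2))
      ≤ lam i * lam j * (A j i * star (A i j)).re := by
    intro i j
    by_cases hij : i = j
    · subst hij
      have h0 : (A i i * star (A i i)).re = Complex.normSq (A i i) := by
        rw [show star (A i i) = (starRingEnd ℂ) (A i i) from rfl, Complex.mul_conj]
        simp
      rw [h0]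
      have := Complex.normSq_nonneg (A i i)
      nlinarith [sq_nonneg (‖A i i‖), mul_nonneg (hlam i) (hlam i),
        mul_nonneg (mul_nonneg (hlam i) (hlam i)) this]
    · have h1 : lam i ^ 2 + lam j ^ 2 ≤ 1 := by
        rw [← hsum]
        calc lam i ^ 2 + lam j ^ 2
            = ∑ k ∈ ({i, j} : Finset (Fin m)), lam k ^ 2 := (Finset.sum_pair (f := fun k => lam k ^ 2) hij).symm
          _ ≤ ∑ k, lam k ^ 2 := Finset.sum_le_sum_of_subset_of_nonneg
              (Finset.subset_univ _) (fun k _ _ => sq_nonneg (lam k))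
      have h2 : lam i * lam j ≤ 1/2 := by nlinarith [sq_nonneg (lam i - lam j)]
      have h3 : -(‖A j i‖ * ‖A i j‖) ≤ (A j i * star (A i j)).re := by
        have habs : |(A j i * star (A i j)).re| ≤ ‖A j i * star (A i j)‖ :=
          Complex.abs_re_le_norm _
        rw [norm_mul, norm_star] at habs
        linarith [neg_abs_le ((A j i * star (A i j)).re)]
      have hL : 0 ≤ lam i * lam j := mul_nonneg (hlam i) (hlam j)
      nlinarith [mul_le_mul_of_nonneg_left h3 hL, sq_nonneg (‖A i j‖ - ‖A j i‖),
        mul_nonneg (norm_nonneg (A i j)) (norm_nonneg (A j i)),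
        mul_le_mul_of_nonneg_right h2
          (mul_nonneg (norm_nonneg (A j i)) (norm_nonneg (A i j)))]
  rw [key]
  have hre : (∑ i, ∑ j, ((lam i : ℂ) * (lam j : ℂ)) * (A j i * star (A i j))).re
      = ∑ i, ∑ j, lam i * lam j * (A j i * star (A i j)).re := by
    rw [Complex.re_sum]
    refine Finset.sum_congr rfl fun i _ => ?_
    rw [Complex.re_sum]
    refine Finset.sum_congr rfl fun j _ => ?_
    rw [← Complex.ofReal_mul, Complex.re_ofReal_mul]
  rw [hre]
  have hlow : ∑ i, ∑ j, -((1/4) * (‖A i j‖ ^ 2 + ‖A j i‖ ^ 2))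
      ≤ ∑ i, ∑ j, lam i * lam j * (A j i * star (A i j)).re :=
    Finset.sum_le_sum fun i _ => Finset.sum_le_sum fun j _ => hterm i j
  have heq : ∑ i, ∑ j, -((1/4 : ℝ) * (‖A i j‖ ^ 2 + ‖A j i‖ ^ 2))
      = -((1/2) * ∑ i, ∑ j, ‖A i j‖ ^ 2) := by
    have hsplit : ∑ i, ∑ j, -((1/4 : ℝ) * (‖A i j‖ ^ 2 + ‖A j i‖ ^ 2))
        = (∑ i, ∑ j, -((1/4 : ℝ) * ‖A i j‖ ^ 2))
          + ∑ i, ∑ j, -((1/4 : ℝ) * ‖A j i‖ ^ 2) := by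
      rw [← Finset.sum_add_distrib]
      refine Finset.sum_congr rfl fun i _ => ?_
      rw [← Finset.sum_add_distrib]
      exact Finset.sum_congr rfl fun j _ => by ring
    rw [hsplit]
    have hcomm : ∑ i, ∑ j, -((1/4 : ℝ) * ‖A j i‖ ^ 2)
        = ∑ i, ∑ j, -((1/4 : ℝ) * ‖A i j‖ ^ 2) := Finset.sum_comm
    rw [hcomm]
    have hquarter : ∑ i, ∑ j, -((1/4 : ℝ) * ‖A i j‖ ^ 2)
        = -(1/4 : ℝ) * ∑ i, ∑ j, ‖A i j‖ ^ 2 := by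
      rw [Finset.mul_sum]
      refine Finset.sum_congr rfl fun i _ => ?_
      rw [Finset.mul_sum]
      exact Finset.sum_congr rfl fun j _ => by ring
    rw [hquarter]
    ring
  rw [heq] at hlow
  have : -(1/2 : ℝ) ≤ -((1/2) * ∑ i, ∑ j, ‖A i j‖ ^ 2) := by nlinarith [bessel]
  linarith
end

section
/- For a pure state |ψ⟩ on H_A ⊗ H_B with Schmidt coefficients λ_i, the operator W = (1/2)·𝟙 - |ψ⟩⟨ψ| satisfies 0 ≤ W^{T_A} ≤ 𝟙, provided max_i λ_i² ≤ 1/2 and |ψ⟩ has at least two nonzero Schmidt coefficients. -/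
open Matrix ComplexOrder

namespace Stmt6Aux

lemma ptA_one {α β : Type*} [Fintype α] [Fintype β] [DecidableEq α] [DecidableEq β] :
    ptA (1 : Matrix (α × β) (α × β) ℂ) = 1 := by
  ext ⟨a, b⟩ ⟨c, d⟩
  simp only [ptA, of_apply, one_apply, Prod.mk.injEq]
  by_cases h1 : a = c
  · subst h1; simp
  · simp [h1, Ne.symm h1]

lemma ptA_isHermitian {α β : Type*} [Fintype α] [Fintype β]
    {M : Matrix (α × β) (α × β) ℂ} (h : M.IsHermitian) : (ptA M).IsHermitian := by
  ext p q
  simp only [conjTranspose_apply, ptA, of_apply]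
  exact h.apply (q.1, p.2) (p.1, q.2)

lemma ptA_sub {α β : Type*} (M N : Matrix (α × β) (α × β) ℂ) :
    ptA (M - N) = ptA M - ptA N := by
  ext p q; simp [ptA]

lemma ptA_smul {α β : Type*} (c : ℂ) (M : Matrix (α × β) (α × β) ℂ) :
    ptA (c • M) = c • ptA M := by
  ext p q; simp [ptA]

lemma sum_swap4 {α β : Type*} [Fintype α] [Fintype β] {m : ℕ}
    (G : (α × β) → (α × β) → Fin m → Fin m → ℂ) :
    (∑ p : α × β, ∑ q : α × β, ∑ i, ∑ j, G p q i j)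
      = ∑ i, ∑ j, ∑ p : α × β, ∑ q : α × β, G p q i j := by
  calc (∑ p : α × β, ∑ q : α × β, ∑ i, ∑ j, G p q i j)
      = ∑ p : α × β, ∑ i, ∑ q : α × β, ∑ j, G p q i j :=
        Finset.sum_congr rfl fun p _ => Finset.sum_comm
    _ = ∑ i, ∑ p : α × β, ∑ q : α × β, ∑ j, G p q i j := Finset.sum_comm
    _ = ∑ i, ∑ p : α × β, ∑ j, ∑ q : α × β, G p q i j :=
        Finset.sum_congr rfl fun i _ => Finset.sum_congr rfl fun p _ => Finset.sum_comm
    _ = ∑ i, ∑ j, ∑ p : α × β, ∑ q : α × β, G p q i j :=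
        Finset.sum_congr rfl fun i _ => Finset.sum_comm

/-- The quadratic form of the partially transposed pure state. -/
lemma quad_eq {α β : Type*} [Fintype α] [Fintype β] {m : ℕ}
    (lam : Fin m → ℝ) (μ : Fin m → α → ℂ) (ν : Fin m → β → ℂ) (x : α × β → ℂ) :
    star x ⬝ᵥ ((ptA (Matrix.of fun p q =>
        (∑ i, (lam i : ℂ) * μ i p.1 * ν i p.2) *
          star (∑ i, (lam i : ℂ) * μ i q.1 * ν i q.2))) *ᵥ x)
      = ∑ i, ∑ j, ((lam i : ℂ) * (lam j : ℂ)) *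
          (starRingEnd ℂ) (∑ q : α × β, x q * μ j q.1 * (starRingEnd ℂ) (ν i q.2)) *
          (∑ q : α × β, x q * μ i q.1 * (starRingEnd ℂ) (ν j q.2)) := by
  have h1 : star x ⬝ᵥ ((ptA (Matrix.of fun p q =>
        (∑ i, (lam i : ℂ) * μ i p.1 * ν i p.2) *
          star (∑ i, (lam i : ℂ) * μ i q.1 * ν i q.2))) *ᵥ x)
      = ∑ p : α × β, ∑ q : α × β, ∑ i, ∑ j,
          ((lam i : ℂ) * (lam j : ℂ)) *
            ((starRingEnd ℂ) (x p) * (starRingEnd ℂ) (μ j p.1) * ν i p.2) *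
            (x q * μ i q.1 * (starRingEnd ℂ) (ν j q.2)) := by
    simp only [dotProduct, mulVec, Pi.star_apply, ptA, of_apply]
    refine Finset.sum_congr rfl fun p _ => ?_
    rw [Finset.mul_sum]
    refine Finset.sum_congr rfl fun q _ => ?_
    rw [star_sum, Finset.sum_mul_sum, Finset.sum_mul, Finset.mul_sum]
    refine Finset.sum_congr rfl fun i _ => ?_
    rw [Finset.sum_mul, Finset.mul_sum]
    refine Finset.sum_congr rfl fun j _ => ?_
    simp only [star_mul', Complex.star_def, _root_.map_mul, Complex.conj_ofReal]
    ring
  rw [h1, sum_swap4]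
  refine Finset.sum_congr rfl fun i _ => Finset.sum_congr rfl fun j _ => ?_
  conv_rhs => rw [map_sum, mul_assoc, Finset.sum_mul_sum]
  rw [Finset.mul_sum]
  refine Finset.sum_congr rfl fun p _ => ?_
  rw [Finset.mul_sum]
  refine Finset.sum_congr rfl fun q _ => ?_
  simp only [_root_.map_mul, Complex.conj_conj, Complex.conj_ofReal]
  ring

/-- Bessel inequality for the coefficients against the product orthonormal family. -/
lemma bessel {α β : Type*} [Fintype α] [Fintype β] {m : ℕ}
    (μ : Fin m → α → ℂ) (ν : Fin m → β → ℂ)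
    (hμ : ∀ i j, star (μ i) ⬝ᵥ μ j = if i = j then 1 else 0)
    (hν : ∀ i j, star (ν i) ⬝ᵥ ν j = if i = j then 1 else 0)
    (x : α × β → ℂ) :
    ∑ i, ∑ j, ‖∑ q : α × β, x q * μ i q.1 * (starRingEnd ℂ) (ν j q.2)‖ ^ 2
      ≤ ∑ q : α × β, ‖x q‖ ^ 2 := by
  classical
  set v : Fin m × Fin m → EuclideanSpace ℂ (α × β) :=
    fun ij => WithLp.toLp 2 (fun q : α × β => (starRingEnd ℂ) (μ ij.1 q.1) * ν ij.2 q.2) with hv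
  set xE : EuclideanSpace ℂ (α × β) := WithLp.toLp 2 (fun q => x q) with hxE
  have hon : Orthonormal ℂ v := by
    rw [orthonormal_iff_ite]
    rintro ⟨i, j⟩ ⟨k, l⟩
    have key : (inner ℂ (v (i, j)) (v (k, l)) : ℂ)
        = (star (μ k) ⬝ᵥ μ i) * (star (ν j) ⬝ᵥ ν l) := by
      simp only [PiLp.inner_apply, RCLike.inner_apply, hv, PiLp.toLp_apply, _root_.map_mul, Complex.conj_conj]
      rw [dotProduct, dotProduct, Finset.sum_mul_sum, Fintype.sum_prod_type]
      refine Finset.sum_congr rfl fun a _ => Finset.sum_congr rfl fun b _ => ?_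
      simp only [Pi.star_apply, Complex.star_def]
      ring
    rw [key, hμ, hν]
    by_cases h1 : i = k <;> by_cases h2 : j = l <;>
      simp [h1, h2, Prod.ext_iff, eq_comm]
  have hb := hon.sum_inner_products_le (s := Finset.univ) xE
  have hinner : ∀ i j, (inner ℂ (v (i, j)) xE : ℂ)
      = ∑ q : α × β, x q * μ i q.1 * (starRingEnd ℂ) (ν j q.2) := by
    intro i j
    simp only [PiLp.inner_apply, RCLike.inner_apply, hv, hxE, PiLp.toLp_apply, _root_.map_mul, Complex.conj_conj]
    refine Finset.sum_congr rfl fun q _ => ?_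
    ring
  have hnorm : ‖xE‖ ^ 2 = ∑ q : α × β, ‖x q‖ ^ 2 := by
    rw [EuclideanSpace.norm_eq, Real.sq_sqrt (by positivity)]
  rw [Fintype.sum_prod_type] at hb
  calc ∑ i, ∑ j, ‖∑ q : α × β, x q * μ i q.1 * (starRingEnd ℂ) (ν j q.2)‖ ^ 2
      = ∑ i, ∑ j, ‖(inner ℂ (v (i, j)) xE : ℂ)‖ ^ 2 := by
        refine Finset.sum_congr rfl fun i _ => Finset.sum_congr rfl fun j _ => ?_
        rw [hinner]
    _ ≤ ‖xE‖ ^ 2 := hb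
    _ = ∑ q : α × β, ‖x q‖ ^ 2 := hnorm

end Stmt6Aux

open Stmt6Aux in
/-- For a pure state `|ψ⟩` with all squared Schmidt coefficients at most `1/2` and at
least two nonzero Schmidt coefficients, `W = (1/2)·𝟙 - |ψ⟩⟨ψ|` satisfies `0 ≤ W^{T_A} ≤ 𝟙`. -/
theorem stmt6 {α β : Type*} [Fintype α] [Fintype β] [DecidableEq α] [DecidableEq β] {m : ℕ}
    (lam : Fin m → ℝ) (μ : Fin m → α → ℂ) (ν : Fin m → β → ℂ)
    (hlam : ∀ i, 0 ≤ lam i) (hsum : ∑ i, (lam i) ^ 2 = 1)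
    (hmax : ∀ i, (lam i) ^ 2 ≤ 1/2)
    (htwo : ∃ i j, i ≠ j ∧ lam i ≠ 0 ∧ lam j ≠ 0)
    (hμ : ∀ i j, star (μ i) ⬝ᵥ μ j = if i = j then 1 else 0)
    (hν : ∀ i j, star (ν i) ⬝ᵥ ν j = if i = j then 1 else 0)
    (ψ : α × β → ℂ) (hψ : ψ = fun p => ∑ i, (lam i : ℂ) * μ i p.1 * ν i p.2)
    (W : Matrix (α × β) (α × β) ℂ)
    (hW : W = (2⁻¹ : ℂ) • 1 - Matrix.of (fun p q => ψ p * star (ψ q))) :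
    (ptA W).PosSemidef ∧ (1 - ptA W).PosSemidef := by
  classical
  subst hψ hW
  set ρ : Matrix (α × β) (α × β) ℂ := Matrix.of (fun p q =>
      (∑ i, (lam i : ℂ) * μ i p.1 * ν i p.2) *
        star (∑ i, (lam i : ℂ) * μ i q.1 * ν i q.2)) with hρ
  have hρH : ρ.IsHermitian := by
    ext p q
    simp only [hρ, conjTranspose_apply, of_apply, star_mul', star_star]
    ring
  have hptA : ptA ((2⁻¹ : ℂ) • 1 - ρ) = (2⁻¹ : ℂ) • 1 - ptA ρ := by
    rw [ptA_sub, ptA_smul, ptA_one]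
  have hermW : (ptA ((2⁻¹ : ℂ) • 1 - ρ)).IsHermitian := by
    rw [hptA]
    refine Matrix.IsHermitian.sub ?_ (ptA_isHermitian hρH)
    rw [Matrix.IsHermitian, conjTranspose_smul, conjTranspose_one]
    norm_num
  -- main quantitative estimate
  have main : ∀ x : (α × β) → ℂ, ∃ t : ℝ, |t| ≤ (∑ q : α × β, ‖x q‖ ^ 2) / 2 ∧
      star x ⬝ᵥ ((ptA ((2⁻¹ : ℂ) • 1 - ρ)) *ᵥ x)
        = (((∑ q : α × β, ‖x q‖ ^ 2) / 2 - t : ℝ) : ℂ) := by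
    intro x
    set c : Fin m → Fin m → ℂ :=
      fun i j => ∑ q : α × β, x q * μ i q.1 * (starRingEnd ℂ) (ν j q.2) with hc
    set T : ℂ := ∑ i, ∑ j, ((lam i : ℂ) * (lam j : ℂ)) *
        (starRingEnd ℂ) (c j i) * (c i j) with hT
    set N : ℝ := ∑ q : α × β, ‖x q‖ ^ 2 with hNdef
    have hTconj : (starRingEnd ℂ) T = T := by
      rw [hT]
      simp only [map_sum, _root_.map_mul, Complex.conj_conj, Complex.conj_ofReal]
      rw [Finset.sum_comm]
      refine Finset.sum_congr rfl fun i _ => Finset.sum_congr rfl fun j _ => ?_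
      ring
    have him : T.im = 0 := Complex.conj_eq_iff_im.mp hTconj
    have hre : T = ((T.re : ℝ) : ℂ) := by
      rw [← Complex.re_add_im T, him]
      simp
    -- bound on ‖T‖
    have hhalf : ∀ i j, lam i * lam j ≤ 1 / 2 := fun i j => by
      nlinarith [hlam i, hlam j, hmax i, hmax j, sq_nonneg (lam i - lam j)]
    have hB : ∑ i, ∑ j, ‖c i j‖ ^ 2 ≤ N := bessel μ ν hμ hν x
    have habs : ‖T‖ ≤ N / 2 := by
      have step1 : ‖T‖ ≤ ∑ i, ∑ j, (lam i * lam j) * (‖c j i‖ * ‖c i j‖) := by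
        rw [hT]
        refine (norm_sum_le _ _).trans (Finset.sum_le_sum fun i _ => ?_)
        refine (norm_sum_le _ _).trans (Finset.sum_le_sum fun j _ => le_of_eq ?_)
        rw [norm_mul, norm_mul, norm_mul, RCLike.norm_conj, Complex.norm_real,
          Complex.norm_real, Real.norm_eq_abs, Real.norm_eq_abs,
          abs_of_nonneg (hlam i), abs_of_nonneg (hlam j)]
        ring
      have step2 : ∑ i, ∑ j, (lam i * lam j) * (‖c j i‖ * ‖c i j‖)
          ≤ ∑ i, ∑ j, (1/4 : ℝ) * (‖c i j‖ ^ 2 + ‖c j i‖ ^ 2) := by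
        refine Finset.sum_le_sum fun i _ => Finset.sum_le_sum fun j _ => ?_
        nlinarith [mul_le_mul_of_nonneg_right (hhalf i j)
            (mul_nonneg (norm_nonneg (c j i)) (norm_nonneg (c i j))),
          sq_nonneg (‖c i j‖ - ‖c j i‖)]
      have hsym : ∑ i, ∑ j, (‖c j i‖ : ℝ) ^ 2 = ∑ i, ∑ j, ‖c i j‖ ^ 2 :=
        Finset.sum_comm
      have step3 : ∑ i, ∑ j, (1/4 : ℝ) * (‖c i j‖ ^ 2 + ‖c j i‖ ^ 2)
          = (1/2 : ℝ) * ∑ i, ∑ j, ‖c i j‖ ^ 2 := by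
        simp only [mul_add, Finset.sum_add_distrib, ← Finset.mul_sum]
        rw [hsym]
        ring
      calc ‖T‖ ≤ ∑ i, ∑ j, (lam i * lam j) * (‖c j i‖ * ‖c i j‖) := step1
        _ ≤ ∑ i, ∑ j, (1/4 : ℝ) * (‖c i j‖ ^ 2 + ‖c j i‖ ^ 2) := step2
        _ = (1/2 : ℝ) * ∑ i, ∑ j, ‖c i j‖ ^ 2 := step3
        _ ≤ N / 2 := by linarith
    have habsre : |T.re| ≤ N / 2 := by
      have h := Complex.abs_re_le_norm T
      linarith
    refine ⟨T.re, habsre, ?_⟩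
    have hquad : star x ⬝ᵥ (ptA ρ *ᵥ x) = T := quad_eq lam μ ν x
    have hxx : star x ⬝ᵥ x = ((N : ℝ) : ℂ) := by
      rw [hNdef, dotProduct]
      push_cast
      refine Finset.sum_congr rfl fun q _ => ?_
      rw [Pi.star_apply, Complex.star_def, RCLike.conj_mul]
      norm_cast
    rw [hptA, sub_mulVec, dotProduct_sub, smul_mulVec, one_mulVec,
      dotProduct_smul, hquad, hxx, smul_eq_mul]
    have h2N : (2⁻¹ : ℂ) * (N : ℂ) = ((N / 2 : ℝ) : ℂ) := by push_cast; ring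
    rw [h2N, Complex.ofReal_sub, ← hre]
  constructor
  · refine posSemidef_iff_dotProduct_mulVec.mpr ⟨hermW, fun x => ?_⟩
    obtain ⟨t, ht, heq⟩ := main x
    rw [heq, Complex.zero_le_real]
    have := (abs_le.mp ht).2
    linarith
  · refine posSemidef_iff_dotProduct_mulVec.mpr ⟨Matrix.IsHermitian.sub Matrix.isHermitian_one hermW, fun x => ?_⟩
    obtain ⟨t, ht, heq⟩ := main x
    rw [sub_mulVec, dotProduct_sub, one_mulVec, heq]
    have hxx : star x ⬝ᵥ x = (((∑ q : α × β, ‖x q‖ ^ 2) : ℝ) : ℂ) := by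
      rw [dotProduct]
      push_cast
      refine Finset.sum_congr rfl fun q _ => ?_
      rw [Pi.star_apply, Complex.star_def, RCLike.conj_mul]
      norm_cast
    rw [hxx, ← Complex.ofReal_sub, Complex.zero_le_real]
    have := (abs_le.mp ht).1
    linarith
end

section
/- The negativity of a state ρ on H_A ⊗ H_B, defined as the sum of absolute values of the negative eigenvalues of ρ^{T_A}, equals -min over operators W of Tr(Wρ), where the minimum is over all W of the form W = P + Q^{T_A} with 0 ≤ P ≤ 𝟙 and 0 ≤ Q ≤ 𝟙. -/
open Matrix ComplexOrder

lemma diag_nonneg' {n : Type*} [Fintype n] [DecidableEq n] {M : Matrix n n ℂ}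
    (hM : M.PosSemidef) (i : n) : 0 ≤ M i i := by
  exact hM.diag_nonneg

lemma trace_psd_nonneg {n : Type*} [Fintype n] [DecidableEq n] {M : Matrix n n ℂ}
    (hM : M.PosSemidef) : 0 ≤ M.trace :=
  Finset.sum_nonneg fun i _ => diag_nonneg' hM i

lemma trace_mul_psd_nonneg {n : Type*} [Fintype n] [DecidableEq n]
    {P S : Matrix n n ℂ} (hP : P.PosSemidef) (hS : S.PosSemidef) : 0 ≤ (P * S).trace := by
  obtain ⟨B, rfl⟩ : ∃ B : Matrix n n ℂ, S = Bᴴ * B := by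
    open scoped MatrixOrder in
    obtain ⟨B, rfl⟩ := CStarAlgebra.nonneg_iff_eq_star_mul_self.mp hS.nonneg
    exact ⟨B, rfl⟩
  rw [← mul_assoc, Matrix.trace_mul_cycle]
  exact trace_psd_nonneg (hP.mul_mul_conjTranspose_same B)

lemma trace_ptA_mul {α β : Type*} [Fintype α] [Fintype β]
    (Q ρ : Matrix (α × β) (α × β) ℂ) : (ptA Q * ρ).trace = (Q * ptA ρ).trace := by
  simp only [Matrix.trace, Matrix.diag, Matrix.mul_apply, ptA, Matrix.of_apply]
  rw [← Fintype.sum_prod_type', ← Fintype.sum_prod_type']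
  exact Fintype.sum_equiv ⟨fun x => ((x.2.1, x.1.2), (x.1.1, x.2.2)),
    fun x => ((x.2.1, x.1.2), (x.1.1, x.2.2)), fun _ => rfl, fun _ => rfl⟩ _ _ (fun _ => rfl)

/-- The negativity (sum of absolute values of negative eigenvalues of `ρ^{T_A}`) equals
`-min Tr(Wρ)` over all `W = P + Q^{T_A}` with `0 ≤ P ≤ 𝟙` and `0 ≤ Q ≤ 𝟙`; i.e. the
negativity is the greatest element of the set of values `-Tr(Wρ)`. -/
theorem stmt8 {α β : Type*} [Fintype α] [Fintype β] [DecidableEq α] [DecidableEq β]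
    (ρ : Matrix (α × β) (α × β) ℂ) (hρ : ρ.PosSemidef) (htr : ρ.trace = 1)
    (hH : (ptA ρ).IsHermitian) :
    IsGreatest {x : ℝ | ∃ P Q : Matrix (α × β) (α × β) ℂ,
        P.PosSemidef ∧ (1 - P).PosSemidef ∧ Q.PosSemidef ∧ (1 - Q).PosSemidef ∧
        x = -((P + ptA Q) * ρ).trace.re}
      (∑ i ∈ Finset.univ.filter (fun i => hH.eigenvalues i < 0), |hH.eigenvalues i|) := by
  classical
  set U : Matrix (α × β) (α × β) ℂ := (hH.eigenvectorUnitary : Matrix (α × β) (α × β) ℂ) with hUdef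
  set lam : (α × β) → ℝ := hH.eigenvalues with hlam
  have hU1 : U * Uᴴ = 1 := by
    rw [← Matrix.star_eq_conjTranspose]
    exact Matrix.mem_unitaryGroup_iff.mp hH.eigenvectorUnitary.2
  have hU2 : Uᴴ * U = 1 := by
    rw [← Matrix.star_eq_conjTranspose]
    exact Matrix.mem_unitaryGroup_iff'.mp hH.eigenvectorUnitary.2
  have hspec : ptA ρ = U * Matrix.diagonal (fun i => (lam i : ℂ)) * Uᴴ := by
    have := hH.spectral_theorem
    rw [Unitary.conjStarAlgAut_apply, Matrix.star_eq_conjTranspose] at this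
    exact this
  -- the negativity value
  have habs : (∑ i ∈ Finset.univ.filter (fun i => lam i < 0), |lam i|)
      = -(∑ i ∈ Finset.univ.filter (fun i => lam i < 0), lam i) := by
    rw [← Finset.sum_neg_distrib]
    exact Finset.sum_congr rfl fun i hi => abs_of_neg (Finset.mem_filter.mp hi).2
  constructor
  · -- membership: P = 0, Q = projector onto negative eigenspace
    set d : (α × β) → ℝ := fun i => if lam i < 0 then 1 else 0 with hd
    have hd0 : ∀ i, (0 : ℝ) ≤ d i := fun i => by simp only [hd]; split_ifs <;> norm_num
    have hd1 : ∀ i, d i ≤ 1 := fun i => by simp only [hd]; split_ifs <;> norm_num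
    set D : Matrix (α × β) (α × β) ℂ := Matrix.diagonal (fun i => (d i : ℂ)) with hD
    set Q : Matrix (α × β) (α × β) ℂ := U * D * Uᴴ with hQdef
    have hDpsd : D.PosSemidef := Matrix.PosSemidef.diagonal fun i => by
      simpa using Complex.zero_le_real.mpr (hd0 i)
    have hQpsd : Q.PosSemidef := hDpsd.mul_mul_conjTranspose_same U
    have h1Q : (1 : Matrix (α × β) (α × β) ℂ) - Q
        = U * Matrix.diagonal (fun i => ((1 - d i : ℝ) : ℂ)) * Uᴴ := by
      have : Matrix.diagonal (fun i : α × β => ((1 - d i : ℝ) : ℂ))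
          = 1 - D := by
        ext i j
        by_cases h : i = j <;> simp [Matrix.diagonal, Matrix.one_apply, h, hD]
      rw [this, Matrix.mul_sub, Matrix.sub_mul, Matrix.mul_one, hU1, hQdef]
    have h1Qpsd : ((1 : Matrix (α × β) (α × β) ℂ) - Q).PosSemidef := by
      rw [h1Q]
      refine (Matrix.PosSemidef.diagonal fun i => ?_).mul_mul_conjTranspose_same U
      simpa using Complex.zero_le_real.mpr (show (0:ℝ) ≤ 1 - d i by linarith [hd1 i])
    refine ⟨0, Q, Matrix.PosSemidef.zero, by simpa using Matrix.PosSemidef.one,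
      hQpsd, h1Qpsd, ?_⟩
    have hQA : Q * ptA ρ = U * (D * Matrix.diagonal (fun i => (lam i : ℂ))) * Uᴴ := by
      rw [hspec, hQdef]
      simp only [Matrix.mul_assoc]
      rw [← Matrix.mul_assoc Uᴴ U, hU2, Matrix.one_mul]
    have htr1 : ((0 + ptA Q) * ρ).trace = ∑ i, (d i : ℂ) * (lam i : ℂ) := by
      rw [zero_add, trace_ptA_mul, hQA, Matrix.trace_mul_cycle, ← Matrix.mul_assoc, hU2,
        Matrix.one_mul, hD, Matrix.diagonal_mul_diagonal, Matrix.trace_diagonal]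
    rw [htr1]
    rw [Complex.re_sum]
    have : ∀ i : α × β, ((d i : ℂ) * (lam i : ℂ)).re = d i * lam i := fun i => by
      rw [← Complex.ofReal_mul, Complex.ofReal_re]
    simp only [this]
    rw [habs]
    congr 1
    rw [Finset.sum_filter]
    exact Finset.sum_congr rfl fun i _ => by simp only [hd]; split_ifs <;> simp
  · -- upper bound
    rintro x ⟨P, Q, hP, hP1, hQ, hQ1, rfl⟩
    rw [Matrix.add_mul, Matrix.trace_add, Complex.add_re, neg_add]
    have ha : 0 ≤ ((P * ρ).trace).re := by
      have := Complex.le_def.mp (trace_mul_psd_nonneg hP hρ)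
      simpa using this.1
    set M : Matrix (α × β) (α × β) ℂ := Uᴴ * Q * U with hM
    have hMpsd : M.PosSemidef := hQ.conjTranspose_mul_mul_same U
    have h1M : (1 : Matrix (α × β) (α × β) ℂ) - M = Uᴴ * (1 - Q) * U := by
      rw [Matrix.mul_sub, Matrix.sub_mul, Matrix.mul_one, hU2, hM]
    have h1Mpsd : ((1 : Matrix (α × β) (α × β) ℂ) - M).PosSemidef := by
      rw [h1M]; exact hQ1.conjTranspose_mul_mul_same U
    have hMd0 : ∀ i, 0 ≤ (M i i).re := fun i => by
      have := Complex.le_def.mp (diag_nonneg' hMpsd i)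
      simpa using this.1
    have hMd1 : ∀ i, (M i i).re ≤ 1 := fun i => by
      have := Complex.le_def.mp (diag_nonneg' h1Mpsd i)
      have h1 := this.1
      simp only [Matrix.sub_apply, Matrix.one_apply_eq, Complex.sub_re, Complex.one_re,
        Complex.zero_re] at h1
      linarith
    have htr2 : (ptA Q * ρ).trace = ∑ i, M i i * (lam i : ℂ) := by
      rw [trace_ptA_mul, hspec, ← Matrix.mul_assoc, Matrix.trace_mul_comm, ← Matrix.mul_assoc,
        ← Matrix.mul_assoc, ← hM]
      simp [Matrix.trace, Matrix.diag, Matrix.mul_diagonal]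
    have hb : (∑ i ∈ Finset.univ.filter (fun i => lam i < 0), lam i)
        ≤ ((ptA Q * ρ).trace).re := by
      rw [htr2, Complex.re_sum]
      have hterm : ∀ i : α × β, (M i i * (lam i : ℂ)).re = (M i i).re * lam i := fun i => by
        simp [Complex.mul_re]
      simp only [hterm]
      rw [← Finset.sum_filter_add_sum_filter_not Finset.univ (fun i => lam i < 0)
        (fun i => (M i i).re * lam i)]
      have l1 : (∑ i ∈ Finset.univ.filter (fun i => lam i < 0), lam i)
          ≤ ∑ i ∈ Finset.univ.filter (fun i => lam i < 0), (M i i).re * lam i := by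
        refine Finset.sum_le_sum fun i hi => ?_
        have hneg : lam i < 0 := (Finset.mem_filter.mp hi).2
        have := mul_le_mul_of_nonpos_right (hMd1 i) hneg.le
        linarith
      have l2 : 0 ≤ ∑ i ∈ Finset.univ.filter (fun i => ¬ lam i < 0), (M i i).re * lam i :=
        Finset.sum_nonneg fun i hi =>
          mul_nonneg (hMd0 i) (le_of_not_gt (Finset.mem_filter.mp hi).2)
      linarith
    rw [habs]
    linarith
end

section
/- Let ρ_G = Σ_k s_k |k⟩⟨k| be diagonal in a graph state basis and let W be any Hermitian operator with a decomposition W = P + Q^{T_M} with P, Q ≥ 0 for a fixed subset M. Then the graph-diagonalized operators W̄, P̄, Q̄ (obtained by projecting onto the graph basis diagonal) satisfy Tr(W̄ ρ_G) = Tr(W ρ_G), W̄ = P̄ + Q̄^{T_M}, P̄ ≥ 0 and Q̄ ≥ 0. -/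
open Matrix ComplexOrder

/-- Pauli X. -/
def PX : Matrix (Fin 2) (Fin 2) ℂ := !![0, 1; 1, 0]

/-- Pauli Z. -/
def PZ : Matrix (Fin 2) (Fin 2) ℂ := !![1, 0; 0, -1]

/-- The `n`-qubit operator acting as the single-qubit operator `A j` on qubit `j`. -/
def localOp {n : ℕ} (A : Fin n → Matrix (Fin 2) (Fin 2) ℂ) :
    Matrix (Fin n → Fin 2) (Fin n → Fin 2) ℂ :=
  Matrix.of fun x y => ∏ j, A j (x j) (y j)

/-- The stabilizer generator `g_i = X_i ∏_{k ∈ N(i)} Z_k` of the graph state of `G`. -/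
def gen {n : ℕ} (G : SimpleGraph (Fin n)) [DecidableRel G.Adj] (i : Fin n) :
    Matrix (Fin n → Fin 2) (Fin n → Fin 2) ℂ :=
  localOp (fun j => if j = i then PX else if G.Adj i j then PZ else 1)

/-- Partial transposition over the qubits in `M`, in the computational basis. -/
def ptQ {n : ℕ} (M : Finset (Fin n))
    (ρ : Matrix (Fin n → Fin 2) (Fin n → Fin 2) ℂ) :
    Matrix (Fin n → Fin 2) (Fin n → Fin 2) ℂ :=
  Matrix.of fun x y =>
    ρ (fun i => if i ∈ M then y i else x i) (fun i => if i ∈ M then x i else y i)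

/-- The pinching (graph-diagonalization) `Ō = Σ_k |k⟩⟨k| O |k⟩⟨k|` in the graph basis `v`. -/
noncomputable def pinch {n : ℕ} (v : (Fin n → Fin 2) → (Fin n → Fin 2) → ℂ)
    (O : Matrix (Fin n → Fin 2) (Fin n → Fin 2) ℂ) :
    Matrix (Fin n → Fin 2) (Fin n → Fin 2) ℂ :=
  ∑ a, (star (v a) ⬝ᵥ O *ᵥ v a) • Matrix.of (fun x y => v a x * star (v a y))

/-! ### Auxiliary material -/

noncomputable def chi : ZMod 2 → ℂ := fun k => if k = 0 then 1 else -1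
def b2 : Fin 2 → ZMod 2 := fun t => ((t : ℕ) : ZMod 2)
lemma z2 (s : ZMod 2) : s = 0 ∨ s = 1 := by
  fin_cases s
  · exact Or.inl rfl
  · exact Or.inr rfl
lemma chi_add (s t : ZMod 2) : chi (s + t) = chi s * chi t := by
  rcases z2 s with rfl | rfl <;> rcases z2 t with rfl | rfl <;> simp [chi, show (1+1:ZMod 2)=0 from rfl]
lemma chi_mul_self (s : ZMod 2) : chi s * chi s = 1 := by
  rcases z2 s with rfl | rfl <;> simp [chi]
lemma chi_star (s : ZMod 2) : (starRingEnd ℂ) (chi s) = chi s := by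
  rcases z2 s with rfl | rfl <;> simp [chi]
lemma chi_star' (s : ZMod 2) : star (chi s) = chi s := chi_star s
lemma neg_one_pow_fin (t : Fin 2) : (-1 : ℂ) ^ (t : ℕ) = chi (b2 t) := by
  fin_cases t <;> simp [chi, b2]
lemma b2_add (s t : Fin 2) : b2 (s + t) = b2 s + b2 t := by
  fin_cases s <;> fin_cases t <;> rfl
lemma PX_apply (s t : Fin 2) : PX s t = if s = t then 0 else 1 := by
  fin_cases s <;> fin_cases t <;> simp [PX]
lemma PZ_apply (s t : Fin 2) : PZ s t = if s = t then chi (b2 s) else 0 := by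
  fin_cases s <;> fin_cases t <;> simp [PZ, chi, b2]
lemma chi_sum {ι : Type*} (s : Finset ι) (f : ι → ZMod 2) :
    chi (∑ i ∈ s, f i) = ∏ i ∈ s, chi (f i) := by
  induction s using Finset.cons_induction with
  | empty => simp [chi]
  | cons a s ha ih => rw [Finset.sum_cons, Finset.prod_cons, chi_add, ih]
lemma fin2_aa : ∀ s : Fin 2, s + 1 + 1 = s := by decide
lemma fin2_cover : ∀ s t : Fin 2, t ≠ s + 1 → t = s := by decide
lemma fin2_ne_add_one : ∀ s : Fin 2, ¬ s = s + 1 := by decide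
lemma fin2_ne_zero : ∀ t : Fin 2, t ≠ 0 → t = 1 := by decide
lemma zmod2_self (u : ZMod 2) : u + u = 0 := by
  fin_cases u <;> rfl
lemma zmod2_mul2 (u : ZMod 2) : u * 2 = 0 := by
  fin_cases u <;> rfl
lemma b2_flip_sum (t : Fin 2) : b2 (t + 1) + b2 t = 1 := by
  fin_cases t <;> rfl

section Main
variable {n : ℕ} (G : SimpleGraph (Fin n)) [DecidableRel G.Adj]

def flp (i : Fin n) (x : Fin n → Fin 2) : Fin n → Fin 2 :=
  Function.update x i (x i + 1)

lemma flp_apply (i : Fin n) (x : Fin n → Fin 2) (j : Fin n) :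
    flp i x j = if j = i then x i + 1 else x j := by
  simp [flp, Function.update_apply]

lemma flp_flp (i : Fin n) (x : Fin n → Fin 2) : flp i (flp i x) = x := by
  funext j
  simp only [flp_apply]
  by_cases h : j = i
  · subst h; simp [fin2_aa]
  · simp [h]

def nb (i : Fin n) (x : Fin n → Fin 2) : ZMod 2 :=
  ∑ j, if G.Adj i j then b2 (x j) else 0

lemma nb_flp (i : Fin n) (x : Fin n → Fin 2) : nb G i (flp i x) = nb G i x := by
  unfold nb
  apply Finset.sum_congr rfl
  intro j _
  by_cases hj : G.Adj i j
  · rw [if_pos hj, if_pos hj, flp_apply, if_neg]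
    rintro rfl; exact G.irrefl hj
  · rw [if_neg hj, if_neg hj]

lemma gen_flip (v : (Fin n → Fin 2) → (Fin n → Fin 2) → ℂ)
    (heig : ∀ a i, gen G i *ᵥ v a = ((-1 : ℂ) ^ (a i : ℕ)) • v a)
    (a : Fin n → Fin 2) (i : Fin n) (x : Fin n → Fin 2) :
    v a (flp i x) = chi (b2 (a i) + nb G i x) * v a x := by
  have h := congrFun (heig a i) x
  have hgen : (gen G i *ᵥ v a) x = chi (nb G i x) * v a (flp i x) := by
    show (∑ y, gen G i x y * v a y) = _
    rw [Finset.sum_eq_single (flp i x)]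
    · congr 1
      show (∏ j, (if j = i then PX else if G.Adj i j then PZ else 1) (x j) (flp i x j)) = _
      rw [nb, chi_sum]
      apply Finset.prod_congr rfl
      intro j _
      by_cases hj : j = i
      · subst hj
        rw [if_pos rfl, flp_apply, if_pos rfl, PX_apply, if_neg (fin2_ne_add_one _),
          if_neg (fun hadj => G.irrefl hadj), chi]
        simp
      · rw [if_neg hj, flp_apply, if_neg hj]
        by_cases hadj : G.Adj i j
        · rw [if_pos hadj, if_pos hadj, PZ_apply, if_pos rfl]
        · rw [if_neg hadj, if_neg hadj, Matrix.one_apply_eq, chi]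
          simp
    · intro y _ hy
      apply mul_eq_zero_of_left
      show (∏ j, (if j = i then PX else if G.Adj i j then PZ else 1) (x j) (y j)) = 0
      have : ∃ j, y j ≠ flp i x j := by
        by_contra hc
        push_neg at hc
        exact hy (funext hc)
      obtain ⟨j, hj⟩ := this
      apply Finset.prod_eq_zero (Finset.mem_univ j)
      by_cases hji : j = i
      · subst hji
        rw [flp_apply, if_pos rfl] at hj
        have : y j = x j := fin2_cover _ _ hj
        rw [if_pos rfl, PX_apply, this, if_pos rfl]
      · rw [flp_apply, if_neg hji] at hj
        rw [if_neg hji]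
        by_cases hadj : G.Adj i j
        · rw [if_pos hadj, PZ_apply, if_neg (fun hc => hj hc.symm)]
        · rw [if_neg hadj, Matrix.one_apply_ne (fun hc => hj hc.symm)]
    · intro hmem; exact absurd (Finset.mem_univ _) hmem
  rw [hgen, neg_one_pow_fin] at h
  have h2 := congrArg (fun z => chi (nb G i x) * z) h
  simp only [Pi.smul_apply, smul_eq_mul] at h2
  rw [← mul_assoc, chi_mul_self, one_mul] at h2
  rw [h2, chi_add, ← mul_assoc, mul_comm (chi (b2 (a i)))]

def linp (a x : Fin n → Fin 2) : ZMod 2 := ∑ i, b2 (a i) * b2 (x i)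

def qf (x : Fin n → Fin 2) : ZMod 2 :=
  ∑ p : Fin n × Fin n, if p.1 < p.2 ∧ G.Adj p.1 p.2 then b2 (x p.1) * b2 (x p.2) else 0

lemma linp_flp (a : Fin n → Fin 2) (i : Fin n) (x : Fin n → Fin 2) :
    linp a (flp i x) + linp a x = b2 (a i) := by
  unfold linp
  rw [← Finset.sum_add_distrib]
  have hterm : ∀ j : Fin n, b2 (a j) * b2 (flp i x j) + b2 (a j) * b2 (x j)
      = if j = i then b2 (a i) else 0 := by
    intro j
    by_cases hj : j = i
    · subst hj
      rw [flp_apply, if_pos rfl, if_pos rfl, ← mul_add, b2_flip_sum, mul_one]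
    · rw [flp_apply, if_neg hj, if_neg hj, zmod2_self]
  rw [Finset.sum_congr rfl (fun j _ => hterm j), Finset.sum_ite_eq' Finset.univ i,
    if_pos (Finset.mem_univ i)]

lemma qf_flp (i : Fin n) (x : Fin n → Fin 2) :
    qf G (flp i x) = qf G x + nb G i x := by
  have key : qf G (flp i x) + qf G x = nb G i x := by
    unfold qf
    rw [← Finset.sum_add_distrib]
    have hterm : ∀ p : Fin n × Fin n,
        ((if p.1 < p.2 ∧ G.Adj p.1 p.2 then b2 (flp i x p.1) * b2 (flp i x p.2) else 0) +
         (if p.1 < p.2 ∧ G.Adj p.1 p.2 then b2 (x p.1) * b2 (x p.2) else 0))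
        = (if p.1 = i then (if p.1 < p.2 ∧ G.Adj p.1 p.2 then b2 (x p.2) else 0)
           else if p.2 = i ∧ p.1 < p.2 ∧ G.Adj p.1 p.2 then b2 (x p.1) else 0) := by
      rintro ⟨j, k⟩
      dsimp only
      by_cases hj : j = i
      · subst hj
        by_cases hc : j < k ∧ G.Adj j k
        · have hk : ¬ k = j := fun h => (lt_irrefl j (h ▸ hc.1))
          rw [if_pos hc, if_pos hc, if_pos rfl, if_pos hc, flp_apply, if_pos rfl,
            flp_apply, if_neg hk, b2_add]
          have : b2 (1 : Fin 2) = 1 := rfl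
          rw [this]; ring_nf
          rw [zmod2_mul2, zero_add]
        · rw [if_neg hc, if_neg hc, if_pos rfl, if_neg hc, add_zero]
      · rw [if_neg hj]
        by_cases hk : k = i
        · subst hk
          by_cases hc : j < k ∧ G.Adj j k
          · rw [if_pos hc, if_pos hc, if_pos ⟨rfl, hc⟩, flp_apply, if_neg hj,
              flp_apply, if_pos rfl, b2_add]
            have : b2 (1 : Fin 2) = 1 := rfl
            rw [this]; ring_nf
            rw [zmod2_mul2, add_zero]
          · rw [if_neg hc, if_neg hc, if_neg (fun h => hc h.2), add_zero]
        · by_cases hc : j < k ∧ G.Adj j k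
          · rw [if_pos hc, if_pos hc, if_neg (fun h => hk h.1), flp_apply, if_neg hj,
              flp_apply, if_neg hk, zmod2_self]
          · rw [if_neg hc, if_neg hc, if_neg (fun h => hc h.2), add_zero]
    rw [Finset.sum_congr rfl (fun p _ => hterm p), Fintype.sum_prod_type]
    have hrow : ∀ j : Fin n, (∑ k, if j = i then (if j < k ∧ G.Adj j k then b2 (x k) else 0)
        else if k = i ∧ j < k ∧ G.Adj j k then b2 (x j) else 0)
        = if j = i then (∑ k, if i < k ∧ G.Adj i k then b2 (x k) else 0)
          else if j < i ∧ G.Adj j i then b2 (x j) else 0 := by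
      intro j
      by_cases hj : j = i
      · subst hj; simp
      · simp only [if_neg hj]
        rw [Finset.sum_eq_single i]
        · by_cases hc : j < i ∧ G.Adj j i
          · rw [if_pos ⟨rfl, hc⟩, if_pos hc]
          · rw [if_neg (fun h => hc h.2), if_neg hc]
        · intro k _ hk; rw [if_neg (fun h => hk h.1)]
        · intro h; exact absurd (Finset.mem_univ _) h
    rw [Finset.sum_congr rfl (fun j _ => hrow j)]
    have hsplit : ∀ j : Fin n, (if j = i then (∑ k, if i < k ∧ G.Adj i k then b2 (x k) else 0)
          else if j < i ∧ G.Adj j i then b2 (x j) else 0)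
        = (if j < i ∧ G.Adj j i then b2 (x j) else 0)
          + (if j = i then (∑ k, if i < k ∧ G.Adj i k then b2 (x k) else 0) else 0) := by
      intro j
      by_cases hj : j = i
      · subst hj
        rw [if_pos rfl, if_pos rfl, if_neg (fun h => lt_irrefl j h.1), zero_add]
      · rw [if_neg hj, if_neg hj, add_zero]
    rw [Finset.sum_congr rfl (fun j _ => hsplit j), Finset.sum_add_distrib,
      Finset.sum_ite_eq' Finset.univ i, if_pos (Finset.mem_univ i), nb,
      ← Finset.sum_add_distrib]
    apply Finset.sum_congr rfl
    intro j _
    rcases lt_trichotomy j i with h | h | h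
    · by_cases hadj : G.Adj j i
      · rw [if_pos ⟨h, hadj⟩, if_neg (fun hc => lt_asymm h hc.1), add_zero,
          if_pos (G.adj_symm hadj)]
      · rw [if_neg (fun hc => hadj hc.2), if_neg (fun hc => hadj (G.adj_symm hc.2)),
          if_neg (fun hc => hadj (G.adj_symm hc)), add_zero]
    · subst h
      rw [if_neg (fun hc : j < j ∧ G.Adj j j => lt_irrefl j hc.1),
        if_neg (fun hc : G.Adj j j => G.irrefl hc), add_zero]
    · by_cases hadj : G.Adj i j
      · rw [if_neg (fun hc => lt_asymm h hc.1), if_pos ⟨h, hadj⟩, zero_add, if_pos hadj]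
      · rw [if_neg (fun hc => hadj (G.adj_symm hc.2)), if_neg (fun hc => hadj hc.2),
          if_neg hadj, add_zero]
  have h2 : qf G (flp i x) + qf G x + qf G x = nb G i x + qf G x := by rw [key]
  rw [add_assoc, zmod2_self, add_zero] at h2
  rw [h2, add_comm]

/-- The explicit sign formula for the graph basis vectors. -/
lemma v_explicit (v : (Fin n → Fin 2) → (Fin n → Fin 2) → ℂ)
    (heig : ∀ a i, gen G i *ᵥ v a = ((-1 : ℂ) ^ (a i : ℕ)) • v a)
    (a x : Fin n → Fin 2) :
    v a x = chi (linp a x + qf G x) * v a (fun _ => 0) := by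
  suffices h : ∀ m : ℕ, ∀ x : Fin n → Fin 2, (∑ i, (x i : ℕ)) ≤ m →
      v a x = chi (linp a x + qf G x) * v a (fun _ => 0) by
    exact h _ x le_rfl
  intro m
  induction m with
  | zero =>
    intro x hx
    have hx0 : x = (fun _ => 0) := by
      funext i
      have hone : (x i : ℕ) ≤ ∑ j, ((x j : ℕ)) :=
        Finset.single_le_sum (f := fun j => ((x j : ℕ))) (fun j _ => Nat.zero_le _)
          (Finset.mem_univ i)
      have : (x i : ℕ) = 0 := by omega
      exact Fin.ext this
    subst hx0
    have hl : linp a (fun _ => 0) = 0 := by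
      unfold linp; apply Finset.sum_eq_zero; intro i _; simp [b2]
    have hq : qf G (fun _ => 0) = 0 := by
      unfold qf; apply Finset.sum_eq_zero; intro p _; simp [b2]
    rw [hl, hq, add_zero]
    simp [chi]
  | succ m ih =>
    intro x hx
    by_cases hz : ∀ i, x i = 0
    · have hx0 : x = (fun _ => 0) := funext hz
      subst hx0
      have hl : linp a (fun _ => 0) = 0 := by
        unfold linp; apply Finset.sum_eq_zero; intro i _; simp [b2]
      have hq : qf G (fun _ => 0) = 0 := by
        unfold qf; apply Finset.sum_eq_zero; intro p _; simp [b2]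
      rw [hl, hq, add_zero]
      simp [chi]
    · push_neg at hz
      obtain ⟨i, hi⟩ := hz
      have hxi : x i = 1 := fin2_ne_zero _ hi
      set x' := flp i x with hx'
      have hxx' : x = flp i x' := (flp_flp i x).symm
      have hwt : (∑ j, (x' j : ℕ)) + 1 = ∑ j, (x j : ℕ) := by
        rw [← Finset.sum_erase_add _ _ (Finset.mem_univ i),
          ← Finset.sum_erase_add _ (fun j => ((x j : ℕ))) (Finset.mem_univ i)]
        have he : ∑ j ∈ Finset.univ.erase i, (x' j : ℕ)
            = ∑ j ∈ Finset.univ.erase i, (x j : ℕ) := by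
          apply Finset.sum_congr rfl
          intro j hj
          rw [hx', flp_apply, if_neg (Finset.mem_erase.mp hj).1]
        have hxi' : x' i = 0 := by
          rw [hx', flp_apply, if_pos rfl, hxi]; rfl
        rw [he, hxi', hxi]; rfl
      have hle : (∑ j, (x' j : ℕ)) ≤ m := by omega
      have hv' := ih x' hle
      have hflip := gen_flip G v heig a i x'
      rw [← hxx'] at hflip
      rw [hflip, hv', ← mul_assoc, ← chi_add]
      congr 2
      have h1 : linp a x + linp a x' = b2 (a i) := by
        have := linp_flp a i x'
        rw [← hxx'] at this
        exact this
      have h2 : qf G x = qf G x' + nb G i x' := by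
        have := qf_flp G i x'
        rw [← hxx'] at this
        exact this
      have h1' : linp a x = b2 (a i) + linp a x' := by
        have := congrArg (fun z => z + linp a x') h1
        rw [add_assoc, zmod2_self, add_zero] at this
        exact this
      rw [h1', h2]
      ring

/-- Normalization of the constant. -/
lemma v_norm (v : (Fin n → Fin 2) → (Fin n → Fin 2) → ℂ)
    (horth : ∀ a b, star (v a) ⬝ᵥ v b = if a = b then 1 else 0)
    (heig : ∀ a i, gen G i *ᵥ v a = ((-1 : ℂ) ^ (a i : ℕ)) • v a)
    (a : Fin n → Fin 2) :
    star (v a (fun _ => 0)) * v a (fun _ => 0) = ((2 ^ n : ℂ))⁻¹ := by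
  have h := horth a a
  rw [if_pos rfl] at h
  have hd : star (v a) ⬝ᵥ v a = ∑ x, star (v a x) * v a x := by
    rfl
  rw [hd] at h
  have hterm : ∀ x : Fin n → Fin 2, star (v a x) * v a x
      = star (v a (fun _ => 0)) * v a (fun _ => 0) := by
    intro x
    rw [v_explicit G v heig a x]
    rw [star_mul', mul_comm (star (v a (fun _ => 0))), mul_mul_mul_comm, chi_star',
      chi_mul_self, one_mul, mul_comm]
  rw [Finset.sum_congr rfl (fun x _ => hterm x)] at h
  rw [Finset.sum_const, Finset.card_univ] at h
  have hcard : Fintype.card (Fin n → Fin 2) = 2 ^ n := by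
    rw [Fintype.card_fun]
    simp
  rw [hcard, nsmul_eq_mul] at h
  have h2 : ((2:ℂ)^n) ≠ 0 := by positivity
  field_simp at h ⊢
  push_cast at h
  linear_combination h

/-- The pinching kernel. -/
noncomputable def Kk (v : (Fin n → Fin 2) → (Fin n → Fin 2) → ℂ)
    (u w x y : Fin n → Fin 2) : ℂ :=
  ∑ a, star (v a u) * v a w * v a x * star (v a y)

lemma linp_four (a u w x y : Fin n → Fin 2) :
    linp a u + linp a w + linp a x + linp a y
      = ∑ i, b2 (a i) * (b2 (u i) + b2 (w i) + b2 (x i) + b2 (y i)) := by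
  unfold linp
  rw [← Finset.sum_add_distrib, ← Finset.sum_add_distrib, ← Finset.sum_add_distrib]
  apply Finset.sum_congr rfl
  intro i _
  ring

lemma Kk_formula (v : (Fin n → Fin 2) → (Fin n → Fin 2) → ℂ)
    (horth : ∀ a b, star (v a) ⬝ᵥ v b = if a = b then 1 else 0)
    (heig : ∀ a i, gen G i *ᵥ v a = ((-1 : ℂ) ^ (a i : ℕ)) • v a)
    (u w x y : Fin n → Fin 2) :
    Kk v u w x y = ((2 ^ n : ℂ))⁻¹ ^ 2
      * chi (qf G u + qf G w + qf G x + qf G y)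
      * ∏ i, (1 + chi (b2 (u i) + b2 (w i) + b2 (x i) + b2 (y i))) := by
  unfold Kk
  have hterm : ∀ a, star (v a u) * v a w * v a x * star (v a y)
      = ((2 ^ n : ℂ))⁻¹ ^ 2 * chi (qf G u + qf G w + qf G x + qf G y)
        * chi (∑ i, b2 (a i) * (b2 (u i) + b2 (w i) + b2 (x i) + b2 (y i))) := by
    intro a
    rw [v_explicit G v heig a u, v_explicit G v heig a w, v_explicit G v heig a x,
      v_explicit G v heig a y, star_mul', star_mul', chi_star', chi_star']
    have hch : chi (linp a u + qf G u) * chi (linp a w + qf G w)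
        * chi (linp a x + qf G x) * chi (linp a y + qf G y)
        = chi (qf G u + qf G w + qf G x + qf G y)
          * chi (∑ i, b2 (a i) * (b2 (u i) + b2 (w i) + b2 (x i) + b2 (y i))) := by
      rw [← chi_add, ← chi_add, ← chi_add, ← chi_add, ← linp_four]
      congr 1
      ring
    calc chi (linp a u + qf G u) * star (v a (fun _ => 0))
          * (chi (linp a w + qf G w) * v a (fun _ => 0))
          * (chi (linp a x + qf G x) * v a (fun _ => 0))
          * (chi (linp a y + qf G y) * star (v a (fun _ => 0)))
        = (chi (linp a u + qf G u) * chi (linp a w + qf G w)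
            * chi (linp a x + qf G x) * chi (linp a y + qf G y))
          * ((star (v a (fun _ => 0)) * v a (fun _ => 0))
            * (star (v a (fun _ => 0)) * v a (fun _ => 0))) := by ring
      _ = _ := by
          rw [hch, v_norm G v horth heig a]
          ring
  rw [Finset.sum_congr rfl (fun a _ => hterm a)]
  rw [← Finset.mul_sum]
  congr 1
  have : ∀ a : Fin n → Fin 2,
      chi (∑ i, b2 (a i) * (b2 (u i) + b2 (w i) + b2 (x i) + b2 (y i)))
      = ∏ i, chi (b2 (a i) * (b2 (u i) + b2 (w i) + b2 (x i) + b2 (y i))) := by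
    intro a; exact chi_sum _ _
  rw [Finset.sum_congr rfl (fun a _ => this a)]
  rw [← Fintype.prod_sum (fun i t => chi (b2 t * (b2 (u i) + b2 (w i) + b2 (x i) + b2 (y i))))]
  apply Finset.prod_congr rfl
  intro i _
  rw [Fin.sum_univ_two]
  have h0 : b2 (0 : Fin 2) = 0 := rfl
  have h1 : b2 (1 : Fin 2) = 1 := rfl
  rw [h0, h1, zero_mul, one_mul]
  norm_num [chi]

/-- mixing maps of the partial transpose. -/
def mixA (M : Finset (Fin n)) (x y : Fin n → Fin 2) : Fin n → Fin 2 :=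
  fun i => if i ∈ M then y i else x i
def mixB (M : Finset (Fin n)) (x y : Fin n → Fin 2) : Fin n → Fin 2 :=
  fun i => if i ∈ M then x i else y i

lemma mix_invol (M : Finset (Fin n)) (x y : Fin n → Fin 2) :
    mixA M (mixA M x y) (mixB M x y) = x ∧ mixB M (mixA M x y) (mixB M x y) = y := by
  constructor <;>
  · funext i
    by_cases h : i ∈ M <;> simp [mixA, mixB, h]

lemma zmod2_helper1 : ∀ ui uj wi wj xi xj yi yj : ZMod 2,
    ui + wi + xi + yi = 0 → uj + wj + xj + yj = 0 →
    wi * uj + ui * wj + xi * xj + yi * yj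
      = ui * uj + wi * wj + yi * xj + xi * yj := by decide

lemma zmod2_helper2 : ∀ ui uj wi wj xi xj yi yj : ZMod 2,
    ui + wi + xi + yi = 0 → uj + wj + xj + yj = 0 →
    ui * wj + wi * uj + xi * xj + yi * yj
      = ui * uj + wi * wj + xi * yj + yi * xj := by decide

lemma qf_mix (M : Finset (Fin n)) (u w x y : Fin n → Fin 2)
    (hz : ∀ i, b2 (u i) + b2 (w i) + b2 (x i) + b2 (y i) = 0) :
    qf G (mixA M u w) + qf G (mixB M u w) + qf G x + qf G y
      = qf G u + qf G w + qf G (mixA M x y) + qf G (mixB M x y) := by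
  unfold qf
  rw [← Finset.sum_add_distrib, ← Finset.sum_add_distrib, ← Finset.sum_add_distrib,
    ← Finset.sum_add_distrib, ← Finset.sum_add_distrib, ← Finset.sum_add_distrib]
  apply Finset.sum_congr rfl
  rintro ⟨i, j⟩ -
  dsimp only
  by_cases hc : i < j ∧ G.Adj i j
  · simp only [if_pos hc]
    have hAu : ∀ t : Fin n, b2 (mixA M u w t) = if t ∈ M then b2 (w t) else b2 (u t) := by
      intro t; unfold mixA; split <;> rfl
    have hBu : ∀ t : Fin n, b2 (mixB M u w t) = if t ∈ M then b2 (u t) else b2 (w t) := by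
      intro t; unfold mixB; split <;> rfl
    have hAx : ∀ t : Fin n, b2 (mixA M x y t) = if t ∈ M then b2 (y t) else b2 (x t) := by
      intro t; unfold mixA; split <;> rfl
    have hBx : ∀ t : Fin n, b2 (mixB M x y t) = if t ∈ M then b2 (x t) else b2 (y t) := by
      intro t; unfold mixB; split <;> rfl
    rw [hAu, hAu, hBu, hBu, hAx, hAx, hBx, hBx]
    by_cases hi : i ∈ M <;> by_cases hj : j ∈ M
    · simp only [hi, hj, if_true]; ring
    · simp only [hi, hj, if_true, if_false]
      exact zmod2_helper1 _ _ _ _ _ _ _ _ (hz i) (hz j)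
    · simp only [hi, hj, if_true, if_false]
      exact zmod2_helper2 _ _ _ _ _ _ _ _ (hz i) (hz j)
    · simp only [hi, hj, if_false]
  · simp only [if_neg hc, add_zero]

lemma Kk_swap (v : (Fin n → Fin 2) → (Fin n → Fin 2) → ℂ)
    (horth : ∀ a b, star (v a) ⬝ᵥ v b = if a = b then 1 else 0)
    (heig : ∀ a i, gen G i *ᵥ v a = ((-1 : ℂ) ^ (a i : ℕ)) • v a)
    (M : Finset (Fin n)) (u w x y : Fin n → Fin 2) :
    Kk v (mixA M u w) (mixB M u w) x y = Kk v u w (mixA M x y) (mixB M x y) := by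
  rw [Kk_formula G v horth heig, Kk_formula G v horth heig]
  have hzz : ∀ i, b2 (mixA M u w i) + b2 (mixB M u w i) + b2 (x i) + b2 (y i)
      = b2 (u i) + b2 (w i) + b2 (mixA M x y i) + b2 (mixB M x y i) := by
    intro i
    unfold mixA mixB
    by_cases h : i ∈ M <;> simp only [if_pos, if_neg, h, if_true, if_false] <;> ring
  have hprod : ∀ i, b2 (mixA M u w i) + b2 (mixB M u w i) + b2 (x i) + b2 (y i)
      = b2 (u i) + b2 (w i) + b2 (x i) + b2 (y i) := by
    intro i
    unfold mixA mixB
    by_cases h : i ∈ M <;> simp only [h, if_true, if_false] <;> ring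
  have hprod2 : ∀ i, b2 (u i) + b2 (w i) + b2 (mixA M x y i) + b2 (mixB M x y i)
      = b2 (u i) + b2 (w i) + b2 (x i) + b2 (y i) := by
    intro i
    unfold mixA mixB
    by_cases h : i ∈ M <;> simp only [h, if_true, if_false] <;> ring
  by_cases hz : ∀ i, b2 (u i) + b2 (w i) + b2 (x i) + b2 (y i) = 0
  · have hq := qf_mix G M u w x y hz
    have hchi : chi (qf G (mixA M u w) + qf G (mixB M u w) + qf G x + qf G y)
        = chi (qf G u + qf G w + qf G (mixA M x y) + qf G (mixB M x y)) := by rw [hq]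
    rw [hchi]
    congr 1
    apply Finset.prod_congr rfl
    intro i _
    rw [hzz]
  · push_neg at hz
    obtain ⟨i, hi⟩ := hz
    have h1 : b2 (u i) + b2 (w i) + b2 (x i) + b2 (y i) = 1 := by
      revert hi
      generalize (b2 (u i) + b2 (w i) + b2 (x i) + b2 (y i)) = t
      revert t; decide
    have hzero : (1 : ℂ) + chi (b2 (u i) + b2 (w i) + b2 (x i) + b2 (y i)) = 0 := by
      rw [h1]; norm_num [chi]
    have hL : (∏ j, (1 + chi (b2 (mixA M u w j) + b2 (mixB M u w j) + b2 (x j) + b2 (y j)))) = 0 := by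
      apply Finset.prod_eq_zero (Finset.mem_univ i)
      rw [hprod i, hzero]
    have hR : (∏ j, (1 + chi (b2 (u j) + b2 (w j) + b2 (mixA M x y j) + b2 (mixB M x y j)))) = 0 := by
      apply Finset.prod_eq_zero (Finset.mem_univ i)
      rw [hprod2 i, hzero]
    rw [hL, hR, mul_zero, mul_zero]
  
lemma pinch_entry (v : (Fin n → Fin 2) → (Fin n → Fin 2) → ℂ)
    (O : Matrix (Fin n → Fin 2) (Fin n → Fin 2) ℂ) (x y : Fin n → Fin 2) :
    pinch v O x y = ∑ u, ∑ w, Kk v u w x y * O u w := by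
  have h1 : pinch v O x y = ∑ a, (star (v a) ⬝ᵥ O *ᵥ v a) * (v a x * star (v a y)) := by
    unfold pinch
    rw [Matrix.sum_apply]
    apply Finset.sum_congr rfl
    intro a _
    rw [Matrix.smul_apply, Matrix.of_apply, smul_eq_mul]
  rw [h1]
  have h2 : ∀ a, (star (v a) ⬝ᵥ O *ᵥ v a) * (v a x * star (v a y))
      = ∑ u, ∑ w, (star (v a u) * v a w * v a x * star (v a y)) * O u w := by
    intro a
    have hdp : star (v a) ⬝ᵥ O *ᵥ v a = ∑ u, ∑ w, star (v a u) * (O u w * v a w) := by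
      unfold dotProduct mulVec dotProduct
      apply Finset.sum_congr rfl
      intro u _
      rw [Pi.star_apply, Finset.mul_sum]
    rw [hdp, Finset.sum_mul]
    apply Finset.sum_congr rfl; intro u _
    rw [Finset.sum_mul]
    apply Finset.sum_congr rfl; intro w _
    ring
  rw [Finset.sum_congr rfl (fun a _ => h2 a), Finset.sum_comm]
  apply Finset.sum_congr rfl; intro u _
  rw [Finset.sum_comm]
  apply Finset.sum_congr rfl; intro w _
  rw [Kk, Finset.sum_mul]

lemma mix_involutive (M : Finset (Fin n)) :
    Function.Involutive (fun p : (Fin n → Fin 2) × (Fin n → Fin 2) =>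
      (mixA M p.1 p.2, mixB M p.1 p.2)) := by
  rintro ⟨x, y⟩
  have h := mix_invol M x y
  simp only [Prod.mk.injEq]
  exact ⟨h.1, h.2⟩

lemma pinch_ptQ (v : (Fin n → Fin 2) → (Fin n → Fin 2) → ℂ)
    (horth : ∀ a b, star (v a) ⬝ᵥ v b = if a = b then 1 else 0)
    (heig : ∀ a i, gen G i *ᵥ v a = ((-1 : ℂ) ^ (a i : ℕ)) • v a)
    (M : Finset (Fin n)) (Q : Matrix (Fin n → Fin 2) (Fin n → Fin 2) ℂ) :
    pinch v (ptQ M Q) = ptQ M (pinch v Q) := by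
  ext x y
  have hR : ptQ M (pinch v Q) x y = pinch v Q (mixA M x y) (mixB M x y) := rfl
  rw [hR, pinch_entry, pinch_entry]
  have hQ : ∀ u w, ptQ M Q u w = Q (mixA M u w) (mixB M u w) := fun u w => rfl
  rw [← Fintype.sum_prod_type (f := fun p => Kk v p.1 p.2 x y * ptQ M Q p.1 p.2),
    ← Fintype.sum_prod_type (f := fun p => Kk v p.1 p.2 (mixA M x y) (mixB M x y) * Q p.1 p.2)]
  rw [← Equiv.sum_comp (Function.Involutive.toPerm _ (mix_involutive M))
    (fun p : (Fin n → Fin 2) × (Fin n → Fin 2) =>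
      Kk v p.1 p.2 (mixA M x y) (mixB M x y) * Q p.1 p.2)]
  apply Finset.sum_congr rfl
  rintro ⟨u, w⟩ -
  show Kk v u w x y * ptQ M Q u w
    = Kk v (mixA M u w) (mixB M u w) (mixA M x y) (mixB M x y) * Q (mixA M u w) (mixB M u w)
  have hsw := Kk_swap G v horth heig M u w (mixA M x y) (mixB M x y)
  rw [(mix_invol M x y).1, (mix_invol M x y).2] at hsw
  rw [hQ u w, hsw]

lemma pinch_add (v : (Fin n → Fin 2) → (Fin n → Fin 2) → ℂ)
    (A B : Matrix (Fin n → Fin 2) (Fin n → Fin 2) ℂ) :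
    pinch v (A + B) = pinch v A + pinch v B := by
  unfold pinch
  rw [← Finset.sum_add_distrib]
  apply Finset.sum_congr rfl
  intro a _
  rw [Matrix.add_mulVec, dotProduct_add, add_smul]

lemma trace_mul_R (v : (Fin n → Fin 2) → (Fin n → Fin 2) → ℂ)
    (W : Matrix (Fin n → Fin 2) (Fin n → Fin 2) ℂ) (b : Fin n → Fin 2) :
    (W * Matrix.of (fun x y => v b x * star (v b y))).trace = star (v b) ⬝ᵥ W *ᵥ v b := by
  unfold Matrix.trace
  have h1 : ∀ x, (W * Matrix.of (fun x y => v b x * star (v b y))).diag x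
      = ∑ z, star (v b x) * (W x z * v b z) := by
    intro x
    show (∑ z, W x z * (v b z * star (v b x))) = _
    apply Finset.sum_congr rfl
    intro z _
    ring
  rw [Finset.sum_congr rfl (fun x _ => h1 x)]
  unfold dotProduct mulVec dotProduct
  apply Finset.sum_congr rfl
  intro x _
  rw [Pi.star_apply, Finset.mul_sum]

lemma trace_R_R (v : (Fin n → Fin 2) → (Fin n → Fin 2) → ℂ)
    (horth : ∀ a b, star (v a) ⬝ᵥ v b = if a = b then 1 else 0)
    (a b : Fin n → Fin 2) :
    ((Matrix.of (fun x y => v a x * star (v a y)) :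
        Matrix (Fin n → Fin 2) (Fin n → Fin 2) ℂ)
      * Matrix.of (fun x y => v b x * star (v b y))).trace
      = if a = b then 1 else 0 := by
  unfold Matrix.trace
  have h1 : ∀ x, ((Matrix.of (fun x y => v a x * star (v a y)) :
        Matrix (Fin n → Fin 2) (Fin n → Fin 2) ℂ)
      * Matrix.of (fun x y => v b x * star (v b y))).diag x
      = (v a x * star (v b x)) * ∑ z, star (v a z) * v b z := by
    intro x
    show (∑ z, (v a x * star (v a z)) * (v b z * star (v b x))) = _
    rw [Finset.mul_sum]
    apply Finset.sum_congr rfl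
    intro z _
    ring
  rw [Finset.sum_congr rfl (fun x _ => h1 x), ← Finset.sum_mul]
  have h2 : (∑ x, v a x * star (v b x)) = star (star (v a) ⬝ᵥ v b) := by
    have : star (star (v a) ⬝ᵥ v b) = ∑ x, star (star (v a x) * v b x) := by
      unfold dotProduct
      rw [star_sum]
      apply Finset.sum_congr rfl
      intro x _
      rw [Pi.star_apply]
    rw [this]
    apply Finset.sum_congr rfl
    intro x _
    rw [star_mul', star_star, mul_comm]
  have h3 : (∑ z, star (v a z) * v b z) = star (v a) ⬝ᵥ v b := by
    unfold dotProduct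
    apply Finset.sum_congr rfl
    intro z _
    rw [Pi.star_apply]
  rw [h2, h3, horth a b]
  by_cases hab : a = b
  · rw [if_pos hab]; simp
  · rw [if_neg hab]; simp

lemma trace_pinch_R (v : (Fin n → Fin 2) → (Fin n → Fin 2) → ℂ)
    (horth : ∀ a b, star (v a) ⬝ᵥ v b = if a = b then 1 else 0)
    (W : Matrix (Fin n → Fin 2) (Fin n → Fin 2) ℂ) (b : Fin n → Fin 2) :
    (pinch v W * Matrix.of (fun x y => v b x * star (v b y))).trace
      = (W * Matrix.of (fun x y => v b x * star (v b y))).trace := by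
  unfold pinch
  rw [Matrix.sum_mul, Matrix.trace_sum]
  have hterm : ∀ a, ((star (v a) ⬝ᵥ W *ᵥ v a) • (Matrix.of (fun x y => v a x * star (v a y)) :
        Matrix (Fin n → Fin 2) (Fin n → Fin 2) ℂ)
        * Matrix.of (fun x y => v b x * star (v b y))).trace
      = if a = b then star (v a) ⬝ᵥ W *ᵥ v a else 0 := by
    intro a
    rw [Matrix.smul_mul, Matrix.trace_smul, trace_R_R v horth a b, smul_eq_mul,
      mul_ite, mul_one, mul_zero]
  rw [Finset.sum_congr rfl (fun a _ => hterm a), Finset.sum_ite_eq' Finset.univ b,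
    if_pos (Finset.mem_univ b)]
  exact (trace_mul_R v W b).symm

lemma pinch_psd (v : (Fin n → Fin 2) → (Fin n → Fin 2) → ℂ)
    {A : Matrix (Fin n → Fin 2) (Fin n → Fin 2) ℂ} (hA : A.PosSemidef) :
    (pinch v A).PosSemidef := by
  refine Matrix.PosSemidef.of_dotProduct_mulVec_nonneg ?_ ?_
  · show (pinch v A)ᴴ = pinch v A
    unfold pinch
    rw [Matrix.conjTranspose_sum]
    apply Finset.sum_congr rfl
    intro a _
    rw [Matrix.conjTranspose_smul]
    have hsc : star (star (v a) ⬝ᵥ A *ᵥ v a) = star (v a) ⬝ᵥ A *ᵥ v a := by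
      have h0 := hA.dotProduct_mulVec_nonneg (v a)
      have him := (Complex.le_def.mp h0).2
      rw [Complex.star_def, Complex.conj_eq_iff_im]
      exact him.symm
    rw [hsc]
    congr 1
    ext x y
    rw [Matrix.conjTranspose_apply, Matrix.of_apply, Matrix.of_apply, star_mul',
      star_star, mul_comm]
  · intro t
    have hmv : (pinch v A) *ᵥ t = ∑ a, ((star (v a) ⬝ᵥ A *ᵥ v a)
        • (Matrix.of (fun x y => v a x * star (v a y)) :
            Matrix (Fin n → Fin 2) (Fin n → Fin 2) ℂ)) *ᵥ t := by
      unfold pinch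
      exact map_sum (Matrix.mulVec.addMonoidHomLeft t) _ Finset.univ
    have hds : star t ⬝ᵥ (∑ a, ((star (v a) ⬝ᵥ A *ᵥ v a)
        • (Matrix.of (fun x y => v a x * star (v a y)) :
            Matrix (Fin n → Fin 2) (Fin n → Fin 2) ℂ)) *ᵥ t)
        = ∑ a, star t ⬝ᵥ (((star (v a) ⬝ᵥ A *ᵥ v a)
        • (Matrix.of (fun x y => v a x * star (v a y)) :
            Matrix (Fin n → Fin 2) (Fin n → Fin 2) ℂ)) *ᵥ t) := by
      simp only [dotProduct, Finset.sum_apply, Finset.mul_sum, Pi.star_apply]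
      exact Finset.sum_comm
    rw [hmv, hds]
    apply Finset.sum_nonneg
    intro a _
    have hterm : star t ⬝ᵥ (((star (v a) ⬝ᵥ A *ᵥ v a)
        • (Matrix.of (fun x y => v a x * star (v a y)) :
            Matrix (Fin n → Fin 2) (Fin n → Fin 2) ℂ)) *ᵥ t)
        = (star (v a) ⬝ᵥ A *ᵥ v a)
          * (star (star (v a) ⬝ᵥ t) * (star (v a) ⬝ᵥ t)) := by
      rw [Matrix.smul_mulVec, dotProduct_smul, smul_eq_mul]
      congr 1
      have hRv : (Matrix.of (fun x y => v a x * star (v a y)) :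
          Matrix (Fin n → Fin 2) (Fin n → Fin 2) ℂ) *ᵥ t
          = fun x => v a x * (star (v a) ⬝ᵥ t) := by
        funext x
        show (∑ y, (v a x * star (v a y)) * t y) = _
        unfold dotProduct
        rw [Finset.mul_sum]
        apply Finset.sum_congr rfl
        intro y _
        rw [Pi.star_apply]
        ring
      rw [hRv]
      have : star t ⬝ᵥ (fun x => v a x * (star (v a) ⬝ᵥ t))
          = (∑ x, star (t x) * v a x) * (star (v a) ⬝ᵥ t) := by
        unfold dotProduct
        rw [Finset.sum_mul]
        apply Finset.sum_congr rfl
        intro x _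
        rw [Pi.star_apply]
        ring
      rw [this]
      congr 1
      have : star (star (v a) ⬝ᵥ t) = ∑ x, star (star (v a x) * t x) := by
        unfold dotProduct
        rw [star_sum]
        apply Finset.sum_congr rfl
        intro x _
        rw [Pi.star_apply]
      rw [this]
      apply Finset.sum_congr rfl
      intro x _
      rw [star_mul', star_star, mul_comm]
    rw [hterm]
    exact mul_nonneg (hA.dotProduct_mulVec_nonneg (v a)) (star_mul_self_nonneg _)

end Main

/-- For graph-diagonal states, decompositions `W = P + Q^{T_M}` may be
graph-diagonalized: the pinched operators satisfy `Tr(W̄ρ_G) = Tr(Wρ_G)`,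
`W̄ = P̄ + Q̄^{T_M}`, `P̄ ≥ 0` and `Q̄ ≥ 0`. -/
theorem stmt17 {n : ℕ} (G : SimpleGraph (Fin n)) [DecidableRel G.Adj]
    (v : (Fin n → Fin 2) → (Fin n → Fin 2) → ℂ)
    (horth : ∀ a b, star (v a) ⬝ᵥ v b = if a = b then 1 else 0)
    (hcompl : (∑ a, Matrix.of (fun x y => v a x * star (v a y))) = 1)
    (heig : ∀ a i, gen G i *ᵥ v a = ((-1 : ℂ) ^ (a i : ℕ)) • v a)
    (M : Finset (Fin n))
    (ρG : Matrix (Fin n → Fin 2) (Fin n → Fin 2) ℂ)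
    (s : (Fin n → Fin 2) → ℂ)
    (hρ : ρG = ∑ a, s a • Matrix.of (fun x y => v a x * star (v a y)))
    (W P Q : Matrix (Fin n → Fin 2) (Fin n → Fin 2) ℂ)
    (hP : P.PosSemidef) (hQ : Q.PosSemidef) (hW : W = P + ptQ M Q) :
    (pinch v W * ρG).trace = (W * ρG).trace ∧
    pinch v W = pinch v P + ptQ M (pinch v Q) ∧
    (pinch v P).PosSemidef ∧ (pinch v Q).PosSemidef := by
  refine ⟨?_, ?_, pinch_psd v hP, pinch_psd v hQ⟩
  · rw [hρ, Matrix.mul_sum, Matrix.mul_sum, Matrix.trace_sum, Matrix.trace_sum]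
    apply Finset.sum_congr rfl
    intro a _
    rw [Matrix.mul_smul, Matrix.mul_smul, Matrix.trace_smul, Matrix.trace_smul,
      trace_pinch_R v horth W a]
  · rw [hW, pinch_add, pinch_ptQ G v horth heig M Q]
end

section
/- For an n-qubit graph state |Gₙ⟩ and a subset B(n) of b qubits (pairwise non-adjacent with pairwise disjoint neighborhoods), the witness W = (1/2)𝟙 - |Gₙ⟩⟨Gₙ| - (1/2)Σ_{s} ∏_{i∈B} (𝟙 + s_i g_i)/2 (sum over sign vectors s ∈ {±1}^b with at least two entries equal to -1) has trace Tr(W) = 2^{n-1} - 1 - 2^{n-b-1}(2^b - b - 1), and hence white noise tolerance p(n) = (1 - 2^{-n+1} + 2^{-b}(b+1))^{-1} given ⟨Gₙ|W|Gₙ⟩ = -1/2. -/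
open Matrix

/-- The projector `∏_{i∈B} (𝟙 + s_i g_i)/2`, where the sign vector `s` takes the value
`-1` exactly on the subset `T ⊆ B`. -/
noncomputable def projSigns {n : ℕ} (G : SimpleGraph (Fin n)) [DecidableRel G.Adj]
    (B T : Finset (Fin n)) : Matrix (Fin n → Fin 2) (Fin n → Fin 2) ℂ :=
  ((List.finRange n).map (fun i =>
    if i ∈ B then (2⁻¹ : ℂ) • (1 + (if i ∈ T then (-1 : ℂ) else 1) • gen G i) else 1)).prod

lemma localOp_mul {n : ℕ} (A B : Fin n → Matrix (Fin 2) (Fin 2) ℂ) :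
    localOp A * localOp B = localOp (fun j => A j * B j) := by
  ext x y
  simp only [localOp, Matrix.mul_apply, Matrix.of_apply]
  rw [Finset.prod_univ_sum (fun _ => (Finset.univ : Finset (Fin 2)))
    (fun j c => A j (x j) c * B j c (y j))]
  simp [Fintype.piFinset_univ, Finset.prod_mul_distrib]

lemma localOp_one {n : ℕ} : localOp (fun _ : Fin n => (1 : Matrix (Fin 2) (Fin 2) ℂ)) = 1 := by
  ext x y
  simp only [localOp, Matrix.of_apply, Matrix.one_apply]
  by_cases h : x = y
  · simp [h]
  · rw [if_neg h]
    obtain ⟨j, hj⟩ : ∃ j, x j ≠ y j := by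
      by_contra hc; push_neg at hc; exact h (funext hc)
    exact Finset.prod_eq_zero (Finset.mem_univ j) (by simp [hj])

lemma trace_localOp {n : ℕ} (A : Fin n → Matrix (Fin 2) (Fin 2) ℂ) :
    (localOp A).trace = ∏ j, (A j).trace := by
  simp only [Matrix.trace, Matrix.diag, localOp, Matrix.of_apply]
  rw [Finset.prod_univ_sum (fun _ => Finset.univ) (fun j c => A j c c)]
  simp [Fintype.piFinset_univ]

def PMat {n : ℕ} (G : SimpleGraph (Fin n)) [DecidableRel G.Adj] (S : Finset (Fin n)) :
    Matrix (Fin n → Fin 2) (Fin n → Fin 2) ℂ :=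
  localOp (fun j => if j ∈ S then PX else if j ∈ S.biUnion (fun k => G.neighborFinset k) then PZ else 1)

lemma PMat_empty {n : ℕ} (G : SimpleGraph (Fin n)) [DecidableRel G.Adj] :
    PMat G ∅ = 1 := by
  simp [PMat, localOp_one]

lemma trace_PX : PX.trace = 0 := by simp [PX, Matrix.trace_fin_two]

lemma trace_PMat {n : ℕ} (G : SimpleGraph (Fin n)) [DecidableRel G.Adj]
    {S : Finset (Fin n)} (hS : S.Nonempty) : (PMat G S).trace = 0 := by
  obtain ⟨i, hi⟩ := hS
  rw [PMat, trace_localOp]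
  exact Finset.prod_eq_zero (Finset.mem_univ i) (by simp [hi, trace_PX])

lemma gen_mul_PMat {n : ℕ} (G : SimpleGraph (Fin n)) [DecidableRel G.Adj]
    {B : Finset (Fin n)}
    (hind : ∀ i ∈ B, ∀ j ∈ B, i ≠ j →
      ¬ G.Adj i j ∧ ∀ k, ¬ (G.Adj i k ∧ G.Adj j k))
    {S : Finset (Fin n)} {i : Fin n} (hiB : i ∈ B) (hSB : S ⊆ B) (hiS : i ∉ S) :
    gen G i * PMat G S = PMat G (insert i S) := by
  rw [gen, PMat, PMat, localOp_mul]
  refine congrArg localOp (funext fun j => ?_)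
  by_cases hji : j = i
  · subst hji
    have hjb : j ∉ S.biUnion (fun k => G.neighborFinset k) := by
      simp only [Finset.mem_biUnion, SimpleGraph.mem_neighborFinset, not_exists]
      rintro k ⟨hk, hadj⟩
      exact (hind k (hSB hk) j hiB (by rintro rfl; exact hiS hk)).1 hadj
    simp [hiS, hjb]
  · by_cases hjS : j ∈ S
    · have hadj : ¬ G.Adj i j :=
        (hind i hiB j (hSB hjS) (fun h => hji h.symm)).1
      simp [hji, hjS, hadj, Finset.mem_insert]
    · by_cases hadj : G.Adj i j
      · have hjb : j ∉ S.biUnion (fun k => G.neighborFinset k) := by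
          simp only [Finset.mem_biUnion, SimpleGraph.mem_neighborFinset, not_exists]
          rintro k ⟨hk, hkj⟩
          exact (hind i hiB k (hSB hk) (by rintro rfl; exact hiS hk)).2 j ⟨hadj, hkj⟩
        have hmem : j ∈ (insert i S).biUnion (fun k => G.neighborFinset k) :=
          Finset.mem_biUnion.2 ⟨i, Finset.mem_insert_self i S,
            (SimpleGraph.mem_neighborFinset G i j).2 hadj⟩
        simp [hji, hjS, hadj, hjb, hmem, Finset.mem_insert]
      · by_cases hjb : j ∈ S.biUnion (fun k => G.neighborFinset k)
        · have hmem : j ∈ (insert i S).biUnion (fun k => G.neighborFinset k) := by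
            rw [Finset.biUnion_insert]; exact Finset.mem_union_right _ hjb
          simp [hji, hjS, hadj, hjb, hmem, Finset.mem_insert]
        · have hmem : j ∉ (insert i S).biUnion (fun k => G.neighborFinset k) := by
            rw [Finset.biUnion_insert]
            simp only [Finset.mem_union, SimpleGraph.mem_neighborFinset]
            tauto
          simp [hji, hjS, hadj, hjb, hmem, Finset.mem_insert]

noncomputable def fac {n : ℕ} (G : SimpleGraph (Fin n)) [DecidableRel G.Adj]
    (B T : Finset (Fin n)) (i : Fin n) : Matrix (Fin n → Fin 2) (Fin n → Fin 2) ℂ :=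
  if i ∈ B then (2⁻¹ : ℂ) • (1 + (if i ∈ T then (-1 : ℂ) else 1) • gen G i) else 1

lemma expand {n : ℕ} (G : SimpleGraph (Fin n)) [DecidableRel G.Adj]
    {B : Finset (Fin n)} (T : Finset (Fin n))
    (hind : ∀ i ∈ B, ∀ j ∈ B, i ≠ j →
      ¬ G.Adj i j ∧ ∀ k, ¬ (G.Adj i k ∧ G.Adj j k))
    (l : List (Fin n)) (hl : l.Nodup) :
    (l.map (fac G B T)).prod = ∑ S ∈ (l.toFinset ∩ B).powerset,
      ((2:ℂ)⁻¹) ^ (l.toFinset ∩ B).card •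
        ((∏ k ∈ S, (if k ∈ T then (-1:ℂ) else 1)) • PMat G S) := by
  induction l with
  | nil => simp [PMat_empty]
  | cons i l ih =>
    rw [List.nodup_cons] at hl
    obtain ⟨hil, hl⟩ := hl
    rw [List.map_cons, List.prod_cons, ih hl]
    by_cases hiB : i ∈ B
    · have hA : (i :: l).toFinset ∩ B = insert i (l.toFinset ∩ B) := by
        rw [List.toFinset_cons, Finset.insert_inter_of_mem hiB]
      have hiA : i ∉ l.toFinset ∩ B := by
        simp only [Finset.mem_inter, List.mem_toFinset]; tauto
      rw [hA, Finset.sum_powerset_insert hiA]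
      rw [show fac G B T i = (2⁻¹ : ℂ) • (1 + (if i ∈ T then (-1 : ℂ) else 1) • gen G i)
        from if_pos hiB]
      rw [smul_mul_assoc, add_mul, one_mul, smul_mul_assoc, Finset.mul_sum, smul_add]
      simp only [Finset.smul_sum]
      congr 1
      · refine Finset.sum_congr rfl fun S hS => ?_
        simp only [smul_smul, Finset.card_insert_of_notMem hiA]
        congr 1
        ring
      · refine Finset.sum_congr rfl fun S hS => ?_
        have hSA := Finset.mem_powerset.1 hS
        have hiS : i ∉ S := fun h => hiA (hSA h)
        have hSB : S ⊆ B := hSA.trans (Finset.inter_subset_right)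
        rw [mul_smul_comm, mul_smul_comm, gen_mul_PMat G hind hiB hSB hiS,
          Finset.prod_insert hiS, Finset.card_insert_of_notMem hiA]
        simp only [smul_smul]
        congr 1
        ring
    · have hA : (i :: l).toFinset ∩ B = l.toFinset ∩ B := by
        rw [List.toFinset_cons, Finset.insert_inter_of_notMem hiB]
      rw [hA, show fac G B T i = 1 from if_neg hiB, one_mul]

lemma trace_projSigns {n : ℕ} (G : SimpleGraph (Fin n)) [DecidableRel G.Adj]
    {B : Finset (Fin n)} (T : Finset (Fin n))
    (hind : ∀ i ∈ B, ∀ j ∈ B, i ≠ j →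
      ¬ G.Adj i j ∧ ∀ k, ¬ (G.Adj i k ∧ G.Adj j k)) :
    (projSigns G B T).trace = ((2:ℂ)⁻¹) ^ B.card * 2 ^ n := by
  have h : projSigns G B T = ((List.finRange n).map (fac G B T)).prod := rfl
  rw [h, expand G T hind _ (List.nodup_finRange n), List.toFinset_finRange,
    Finset.univ_inter, Matrix.trace_sum]
  rw [Finset.sum_eq_single (∅ : Finset (Fin n))]
  · simp [PMat_empty, Matrix.trace_smul, Matrix.trace_one]
  · intro S hS hne
    simp [Matrix.trace_smul, trace_PMat G (Finset.nonempty_of_ne_empty hne)]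
  · intro h
    exact absurd (Finset.empty_mem_powerset B) h

lemma count_lemma {n : ℕ} (B : Finset (Fin n)) :
    (B.powerset.filter (fun T => 2 ≤ T.card)).card = 2 ^ B.card - B.card - 1 := by
  have h1 : (B.powerset.filter (fun T => ¬ 2 ≤ T.card)).card = B.card + 1 := by
    have he : B.powerset.filter (fun T => ¬ 2 ≤ T.card)
        = B.powerset.filter (fun T => T.card = 0 ∨ T.card = 1) := by
      apply Finset.filter_congr
      intro T _
      constructor
      · intro h; omega
      · intro h; omega
    rw [he, Finset.filter_or, Finset.card_union_of_disjoint]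
    · rw [← Finset.powersetCard_eq_filter, ← Finset.powersetCard_eq_filter,
        Finset.card_powersetCard, Finset.card_powersetCard]
      simp [Nat.choose_one_right, Nat.add_comm]
    · rw [Finset.disjoint_left]
      intro T hT hT'
      simp only [Finset.mem_filter] at hT hT'
      omega
  have h2 := Finset.card_filter_add_card_filter_not
    (s := B.powerset) (p := fun T => 2 ≤ T.card)
  rw [Finset.card_powerset, h1] at h2
  have h3 : B.card < 2 ^ B.card := Nat.lt_two_pow_self
  omega

/-- Trace and white-noise tolerance of the witness
`W = 𝟙/2 - |G⟩⟨G| - (1/2) Σ_s ∏_{i∈B} (𝟙 + s_i g_i)/2`, where the sum runs over sign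
vectors with at least two `-1` entries: `Tr W = 2^{n-1} - 1 - 2^{n-b-1}(2^b - b - 1)`,
and given `⟨G|W|G⟩ = -1/2` the tolerance is `(1 - 2^{-n+1} + 2^{-b}(b+1))^{-1}`. -/
theorem stmt18 {n : ℕ} (hn : 1 ≤ n) (G : SimpleGraph (Fin n)) [DecidableRel G.Adj]
    (B : Finset (Fin n)) (hcard : B.card + 1 ≤ n)
    (hind : ∀ i ∈ B, ∀ j ∈ B, i ≠ j →
      ¬ G.Adj i j ∧ ∀ k, ¬ (G.Adj i k ∧ G.Adj j k))
    (v : (Fin n → Fin 2) → ℂ) (hnorm : star v ⬝ᵥ v = 1)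
    (heig : ∀ i, gen G i *ᵥ v = v)
    (W : Matrix (Fin n → Fin 2) (Fin n → Fin 2) ℂ)
    (hW : W = (2⁻¹ : ℂ) • 1 - Matrix.of (fun x y => v x * star (v y))
      - (2⁻¹ : ℂ) • ∑ T ∈ B.powerset.filter (fun T => 2 ≤ T.card), projSigns G B T) :
    W.trace = (2 : ℂ) ^ (n - 1) - 1
        - (2 : ℂ) ^ (n - B.card - 1) * ((2 : ℂ) ^ B.card - B.card - 1) ∧
    (star v ⬝ᵥ W *ᵥ v = -(1/2) →
      (1 - W.trace.re / ((2 : ℝ) ^ n * (-(1/2))))⁻¹ =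
      (1 - ((2 : ℝ) ^ (n - 1))⁻¹ + ((2 : ℝ) ^ B.card)⁻¹ * (B.card + 1))⁻¹) := by
  set b := B.card with hb
  have htr1 : (Matrix.of (fun x y => v x * star (v y))).trace = 1 := by
    have hd := hnorm
    rw [dotProduct] at hd
    simp only [Pi.star_apply] at hd
    rw [Matrix.trace]
    calc ∑ x, (Matrix.of (fun x y => v x * star (v y))).diag x
        = ∑ x, v x * star (v x) := rfl
      _ = ∑ x, star (v x) * v x := Finset.sum_congr rfl fun x _ => mul_comm _ _
      _ = 1 := hd
  have hsumtr : (∑ T ∈ B.powerset.filter (fun T => 2 ≤ T.card),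
      projSigns G B T).trace
      = ((2 ^ b - b - 1 : ℕ) : ℂ) * (((2:ℂ)⁻¹) ^ b * 2 ^ n) := by
    rw [Matrix.trace_sum]
    rw [Finset.sum_congr rfl (fun T _ => trace_projSigns G T hind)]
    rw [Finset.sum_const, count_lemma, nsmul_eq_mul]
  have hblt : b + 1 ≤ 2 ^ b := Nat.lt_two_pow_self
  have hcast : ((2 ^ b - b - 1 : ℕ) : ℂ) = 2 ^ b - b - 1 := by
    have : (2:ℕ) ^ b - b - 1 = 2 ^ b - (b + 1) := by omega
    rw [this, Nat.cast_sub hblt]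
    push_cast
    ring
  have hpn : (2:ℂ) ^ n = 2 ^ (n - b - 1) * 2 ^ b * 2 := by
    rw [← pow_add, ← pow_succ]; congr 1; omega
  have hpn1 : (2:ℂ) ^ (n - 1) = 2 ^ (n - b - 1) * 2 ^ b := by
    rw [← pow_add]; congr 1; omega
  have h1 : W.trace = (2 : ℂ) ^ (n - 1) - 1
      - (2 : ℂ) ^ (n - b - 1) * ((2 : ℂ) ^ b - b - 1) := by
    rw [hW, Matrix.trace_sub, Matrix.trace_sub, Matrix.trace_smul, Matrix.trace_smul,
      Matrix.trace_one, htr1, hsumtr, hcast]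
    rw [show Fintype.card (Fin n → Fin 2) = 2 ^ n by simp]
    push_cast
    rw [hpn, hpn1]
    rw [inv_pow]
    field_simp
    ring
  refine ⟨h1, fun _ => ?_⟩
  have hre : W.trace.re
      = (2:ℝ) ^ (n - 1) - 1 - (2:ℝ) ^ (n - b - 1) * ((2:ℝ) ^ b - b - 1) := by
    rw [h1]
    rw [show ((2 : ℂ) ^ (n - 1) - 1 - (2 : ℂ) ^ (n - b - 1) * ((2 : ℂ) ^ b - b - 1))
        = (((2:ℝ) ^ (n - 1) - 1 - (2:ℝ) ^ (n - b - 1) * ((2:ℝ) ^ b - b - 1) : ℝ) : ℂ) by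
      push_cast; ring]
    rw [Complex.ofReal_re]
  rw [hre]
  congr 1
  have hr1 : (2:ℝ) ^ n = 2 ^ (n - b - 1) * 2 ^ b * 2 := by
    rw [← pow_add, ← pow_succ]; congr 1; omega
  have hr2 : (2:ℝ) ^ (n - 1) = 2 ^ (n - b - 1) * 2 ^ b := by
    rw [← pow_add]; congr 1; omega
  rw [hr1, hr2]
  have h2 : (2:ℝ) ^ (n - b - 1) ≠ 0 := by positivity
  have h3 : (2:ℝ) ^ b ≠ 0 := by positivity
  field_simp
  ring
end
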